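/- arXiv:1308.6481 — 4 statements merged into one kernel-verified Lean document; each statement's English description precedes it below -/
import Mathlib

section
/- Let X_1, X_2, ... be i.i.d. random variables with distribution P_0 on a finite alphabet. Let L_n be the codelength function of a prefix-free code (satisfying Kraft's inequality: sum over all strings x_1^n of 2^{-L_n(x_1^n)} ≤ 1 for each n). Fix λ > 0 and α ∈ (0,1). Define the stopping time N^1 = inf{n : -L_n(X_1^n) - log P_0(X_1^n) - nλ/2 ≥ -log α} (logs base 2). Then P_0(N^1 < ∞) ≤ α / (2^{λ/2} - 1), and in particular P_0(N^1 < ∞) ≤ α whenever 2^{λ/2} - 1 ≥ 1. -/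
open MeasureTheory ProbabilityTheory Filter Real

/-- For i.i.d. observations from `P₀` (pmf `p`) on a finite alphabet and a
prefix-free code with codelength function `L` satisfying Kraft's inequality, the stopping time
`N¹ = inf{n : -Lₙ(X₁ⁿ) - log₂ P₀(X₁ⁿ) - nλ/2 ≥ -log₂ α}` satisfies
`P₀(N¹ < ∞) ≤ α / (2^{λ/2} - 1)`, and in particular `P₀(N¹ < ∞) ≤ α` if `2^{λ/2} - 1 ≥ 1`. -/
theorem stmt0_universal_test_false_alarm
    {A : Type*} [Fintype A] [Nonempty A] [MeasurableSpace A] [MeasurableSingletonClass A]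
    {Ω : Type*} [MeasurableSpace Ω] (μ : Measure Ω) [IsProbabilityMeasure μ]
    (X : ℕ → Ω → A) (hXmeas : ∀ i, Measurable (X i))
    (p : A → ℝ) (hp0 : ∀ a, 0 ≤ p a) (hp1 : ∑ a, p a = 1)
    -- i.i.d. with marginal `p`: the law of every finite string is the product of the `p`'s
    (hiid : ∀ (n : ℕ) (x : Fin n → A),
      μ {ω | ∀ i : Fin n, X i ω = x i} = ENNReal.ofReal (∏ i : Fin n, p (x i)))
    -- codelength functions for strings of each length
    (L : (n : ℕ) → (Fin n → A) → ℝ)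
    -- Kraft's inequality for each block length
    (hKraft : ∀ n : ℕ, ∑ x : Fin n → A, (2 : ℝ) ^ (-(L n x)) ≤ 1)
    (lam : ℝ) (hlam : 0 < lam) (α : ℝ) (hα : α ∈ Set.Ioo (0 : ℝ) 1)
    -- the test statistic
    (W : ℕ → Ω → ℝ)
    (hW : ∀ n ω, W n ω =
      -(L n (fun i : Fin n => X i ω))
        - Real.logb 2 (∏ i : Fin n, p (X i ω)) - n * (lam / 2)) :
    μ {ω | ∃ n : ℕ, 1 ≤ n ∧ W n ω ≥ -Real.logb 2 α}
      ≤ ENNReal.ofReal (α / (2 ^ (lam / 2) - 1)) ∧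
    ((1 : ℝ) ≤ 2 ^ (lam / 2) - 1 →
      μ {ω | ∃ n : ℕ, 1 ≤ n ∧ W n ω ≥ -Real.logb 2 α} ≤ ENNReal.ofReal α) := by
  classical
  obtain ⟨hα0, hα1⟩ := hα
  set r : ℝ := (2:ℝ) ^ (-(lam/2)) with hrdef
  have hr0 : 0 < r := Real.rpow_pos_of_pos two_pos _
  have hr1 : r < 1 := by
    have : (2:ℝ) ^ (-(lam/2)) < 2 ^ (0:ℝ) :=
      Real.rpow_lt_rpow_left_iff one_lt_two |>.mpr (by linarith)
    simpa [hrdef] using this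
  -- key per-n bound
  have key : ∀ n : ℕ, μ {ω | W n ω ≥ -Real.logb 2 α} ≤ ENNReal.ofReal (α * r ^ n) := by
    intro n
    set S : Finset (Fin n → A) := Finset.univ.filter
      (fun x => -(L n x) - Real.logb 2 (∏ i, p (x i)) - n*(lam/2) ≥ -Real.logb 2 α) with hS
    have hsub : {ω | W n ω ≥ -Real.logb 2 α} ⊆ ⋃ x ∈ S, {ω | ∀ i : Fin n, X (i:ℕ) ω = x i} := by
      intro ω hω
      simp only [Set.mem_setOf_eq, hW] at hω
      exact Set.mem_biUnion (Finset.mem_filter.mpr ⟨Finset.mem_univ _, hω⟩) (fun i => rfl)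
    have hterm : ∀ x ∈ S, (∏ i, p (x i)) ≤ α * (2:ℝ)^(-(L n x)) * r ^ n := by
      intro x hx
      have hx' : -(L n x) - Real.logb 2 (∏ i, p (x i)) - n*(lam/2) ≥ -Real.logb 2 α := by
        simpa [hS] using hx
      set P := ∏ i, p (x i) with hP
      have hP0 : 0 ≤ P := Finset.prod_nonneg (fun i _ => hp0 _)
      have hrn : r ^ n = (2:ℝ) ^ (-(lam/2) * n) := by
        rw [hrdef, ← Real.rpow_natCast ((2:ℝ)^(-(lam/2))) n, ← Real.rpow_mul (by norm_num)]
      rcases eq_or_lt_of_le hP0 with h0 | hPpos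
      · rw [← h0]
        positivity
      · have hlog : Real.logb 2 P ≤ Real.logb 2 α - L n x - n*(lam/2) := by linarith
        have hPe : P = (2:ℝ) ^ (Real.logb 2 P) :=
          (Real.rpow_logb two_pos (by norm_num) hPpos).symm
        rw [hPe]
        calc (2:ℝ) ^ (Real.logb 2 P) ≤ (2:ℝ) ^ (Real.logb 2 α - L n x - n*(lam/2)) :=
              Real.rpow_le_rpow_left_iff one_lt_two |>.mpr hlog
          _ = α * (2:ℝ)^(-(L n x)) * r ^ n := by
              rw [hrn, show Real.logb 2 α - L n x - n*(lam/2)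
                    = Real.logb 2 α + (-(L n x)) + (-(lam/2) * n) by push_cast; ring,
                  Real.rpow_add two_pos, Real.rpow_add two_pos,
                  Real.rpow_logb two_pos (by norm_num) hα0]
    have hsum : ∑ x ∈ S, (∏ i, p (x i)) ≤ α * r ^ n := by
      calc ∑ x ∈ S, (∏ i, p (x i)) ≤ ∑ x ∈ S, α * (2:ℝ)^(-(L n x)) * r ^ n :=
            Finset.sum_le_sum hterm
        _ = (α * r ^ n) * ∑ x ∈ S, (2:ℝ)^(-(L n x)) := by
            rw [Finset.mul_sum]; exact Finset.sum_congr rfl (fun x _ => by ring)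
        _ ≤ (α * r ^ n) * ∑ x : Fin n → A, (2:ℝ)^(-(L n x)) := by
            refine mul_le_mul_of_nonneg_left ?_ (by positivity)
            exact Finset.sum_le_sum_of_subset_of_nonneg (Finset.subset_univ S)
              (fun x _ _ => by positivity)
        _ ≤ (α * r ^ n) * 1 := mul_le_mul_of_nonneg_left (hKraft n) (by positivity)
        _ = α * r ^ n := mul_one _
    calc μ {ω | W n ω ≥ -Real.logb 2 α}
        ≤ ∑ x ∈ S, μ {ω | ∀ i : Fin n, X (i:ℕ) ω = x i} :=
          (measure_mono hsub).trans (measure_biUnion_finset_le _ _)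
      _ = ∑ x ∈ S, ENNReal.ofReal (∏ i, p (x i)) :=
          Finset.sum_congr rfl (fun x _ => hiid n x)
      _ = ENNReal.ofReal (∑ x ∈ S, ∏ i, p (x i)) :=
          (ENNReal.ofReal_sum_of_nonneg
            (fun x _ => Finset.prod_nonneg (fun i _ => hp0 _))).symm
      _ ≤ ENNReal.ofReal (α * r ^ n) := ENNReal.ofReal_le_ofReal hsum
  -- union bound
  have hcover : {ω | ∃ n : ℕ, 1 ≤ n ∧ W n ω ≥ -Real.logb 2 α}
      ⊆ ⋃ n : ℕ, {ω | W (n+1) ω ≥ -Real.logb 2 α} := by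
    rintro ω ⟨n, hn1, hn⟩
    exact Set.mem_iUnion.mpr ⟨n - 1, by simpa [Nat.sub_add_cancel hn1] using hn⟩
  have hsummable : Summable (fun n : ℕ => α * r ^ (n+1)) := by
    have : Summable (fun n : ℕ => (α * r) * r ^ n) :=
      (summable_geometric_of_lt_one hr0.le hr1).mul_left _
    refine this.congr (fun n => by ring)
  have htsum : ∑' n : ℕ, α * r ^ (n+1) = α / ((2:ℝ) ^ (lam/2) - 1) := by
    have h1 : ∑' n : ℕ, α * r ^ (n+1) = (α * r) * (1 - r)⁻¹ := by
      rw [show (fun n : ℕ => α * r ^ (n+1)) = fun n : ℕ => (α * r) * r ^ n from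
        funext fun n => by ring, tsum_mul_left, tsum_geometric_of_lt_one hr0.le hr1]
    rw [h1]
    have hs1 : (1:ℝ) < (2:ℝ) ^ (lam/2) := by
      have : (2:ℝ) ^ (0:ℝ) < 2 ^ (lam/2) :=
        Real.rpow_lt_rpow_left_iff one_lt_two |>.mpr (by linarith)
      simpa using this
    have hsne : ((2:ℝ) ^ (lam/2)) ≠ 0 := by positivity
    have hrs : r = ((2:ℝ) ^ (lam/2))⁻¹ := by
      rw [hrdef, ← Real.rpow_neg_one ((2:ℝ)^(lam/2)), ← Real.rpow_mul (by norm_num)]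
      ring_nf
    rw [hrs]
    have hne : (2:ℝ) ^ (lam/2) - 1 ≠ 0 := by linarith
    field_simp
  have main : μ {ω | ∃ n : ℕ, 1 ≤ n ∧ W n ω ≥ -Real.logb 2 α}
      ≤ ENNReal.ofReal (α / ((2:ℝ) ^ (lam/2) - 1)) := by
    calc μ {ω | ∃ n : ℕ, 1 ≤ n ∧ W n ω ≥ -Real.logb 2 α}
        ≤ μ (⋃ n : ℕ, {ω | W (n+1) ω ≥ -Real.logb 2 α}) := measure_mono hcover
      _ ≤ ∑' n : ℕ, μ {ω | W (n+1) ω ≥ -Real.logb 2 α} := measure_iUnion_le _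
      _ ≤ ∑' n : ℕ, ENNReal.ofReal (α * r ^ (n+1)) := ENNReal.tsum_le_tsum (fun n => key (n+1))
      _ = ENNReal.ofReal (∑' n : ℕ, α * r ^ (n+1)) :=
          (ENNReal.ofReal_tsum_of_nonneg (fun n => by positivity) hsummable).symm
      _ = ENNReal.ofReal (α / ((2:ℝ) ^ (lam/2) - 1)) := by rw [htsum]
  refine ⟨main, fun h1 => main.trans (ENNReal.ofReal_le_ofReal ?_)⟩
  exact div_le_self hα0.le h1
end

section
/- Let X_1, X_2, ... be i.i.d. with distribution P_1 on a finite alphabet, P_0 another distribution on the same alphabet with D(P_1||P_0) > λ, and let L_n satisfy the strong pointwise universality max over x_1^n of (L_n(x_1^n) + log P_1(x_1^n)) = o(n). Define W_n = -L_n(X_1^n) - log P_0(X_1^n) - nλ/2 and stopping times N^0 = inf{n : W_n ≤ log β}, N^1 = inf{n : W_n ≥ -log α}. Then the miss-detection probability P_1(N^0 < N^1) = O(β^s) as β → 0, where s > 0 solves E_1[exp(-s(log(P_1(X_1)/P_0(X_1)) - λ/2 - ε))] = 1 for some fixed 0 < ε < λ/2 with D(P_1||P_0) > λ/2 + ε.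 -/
open MeasureTheory ProbabilityTheory Filter Real

private theorem aux_sum_extend {A : Type*} [Fintype A] (q : A → ℝ) (hq : ∑ a, q a = 1) :
    ∀ (N n : ℕ) (h : n ≤ N) (f : (Fin n → A) → ℝ),
      (∑ x : Fin N → A, f (fun i => x (Fin.castLE h i)) * ∏ i : Fin N, q (x i))
      = ∑ y : Fin n → A, f y * ∏ i : Fin n, q (y i) := by
  classical
  intro N
  induction N with
  | zero =>
    intro n h f
    have hn : n = 0 := Nat.le_zero.1 h
    subst hn
    refine Finset.sum_congr rfl fun x _ => ?_
    congr 1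
  | succ N ih =>
    intro n h f
    rcases eq_or_lt_of_le h with h' | h'
    · subst h'
      refine Finset.sum_congr rfl fun x _ => ?_
      congr 1
    · have h' : n ≤ N := Nat.lt_succ_iff.1 h'
      rw [← Equiv.sum_comp (Fin.snocEquiv (fun _ => A))
        (fun x : Fin (N+1) → A => f (fun i => x (Fin.castLE h i)) * ∏ i : Fin (N+1), q (x i))]
      rw [Fintype.sum_prod_type]
      simp only [Fin.snocEquiv_apply]
      have hterm : ∀ (a : A) (x' : Fin N → A),
          f (fun i => (Fin.snoc x' a : Fin (N+1) → A) (Fin.castLE h i))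
            * ∏ i : Fin (N+1), q ((Fin.snoc x' a : Fin (N+1) → A) i)
          = q a * (f (fun i => x' (Fin.castLE h' i)) * ∏ i : Fin N, q (x' i)) := by
        intro a x'
        have e1 : (fun i => (Fin.snoc x' a : Fin (N+1) → A) (Fin.castLE h i))
            = fun i => x' (Fin.castLE h' i) := by
          funext i
          have e : Fin.castLE h i = Fin.castSucc (Fin.castLE h' i) := Fin.ext rfl
          rw [e, Fin.snoc_castSucc]
        have e2 : (∏ i : Fin (N+1), q ((Fin.snoc x' a : Fin (N+1) → A) i))
            = (∏ i : Fin N, q (x' i)) * q a := by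
          rw [Fin.prod_univ_castSucc]
          simp [Fin.snoc_castSucc, Fin.snoc_last]
        rw [e1, e2]; ring
      calc (∑ a : A, ∑ x' : Fin N → A,
            f (fun i => (Fin.snoc x' a : Fin (N+1) → A) (Fin.castLE h i))
              * ∏ i : Fin (N+1), q ((Fin.snoc x' a : Fin (N+1) → A) i))
          = ∑ a : A, q a * ∑ x' : Fin N → A,
              f (fun i => x' (Fin.castLE h' i)) * ∏ i : Fin N, q (x' i) := by
            refine Finset.sum_congr rfl fun a _ => ?_
            rw [Finset.mul_sum]
            exact Finset.sum_congr rfl fun x' _ => hterm a x'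
        _ = ∑ y : Fin n → A, f y * ∏ i : Fin n, q (y i) := by
            rw [← Finset.sum_mul, hq, one_mul, ih n h' f]

/-- Finite-alphabet universal sequential test under `H₁`: with i.i.d.
observations from `P₁`, `D(P₁‖P₀) > λ`, and a strongly pointwise-universal code
(`maxₓ |Lₙ(x₁ⁿ) + log P₁(x₁ⁿ)| = o(n)`), the miss-detection probability
`P₁(N⁰ < N¹)` is `O(β^s)` as `β → 0`, where `s > 0` solves
`E₁[exp(-s(log(P₁(X₁)/P₀(X₁)) - λ/2 - ε))] = 1` for a fixed `0 < ε < λ/2` with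
`D(P₁‖P₀) > λ/2 + ε`. -/
theorem stmt4_miss_detection_bound
    {A : Type*} [Fintype A] [Nonempty A] [MeasurableSpace A] [MeasurableSingletonClass A]
    {Ω : Type*} [MeasurableSpace Ω] (μ : Measure Ω) [IsProbabilityMeasure μ]
    (X : ℕ → Ω → A) (hXmeas : ∀ i, Measurable (X i))
    (p1 p0 : A → ℝ) (hp1pos : ∀ a, 0 < p1 a) (hp0pos : ∀ a, 0 < p0 a)
    (hp1sum : ∑ a, p1 a = 1) (hp0sum : ∑ a, p0 a = 1)
    -- i.i.d. with marginal `p1` (law of each finite string is the product law)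
    (hiid : ∀ (n : ℕ) (x : Fin n → A),
      μ {ω | ∀ i : Fin n, X i ω = x i} = ENNReal.ofReal (∏ i : Fin n, p1 (x i)))
    (lam : ℝ) (hlam : 0 < lam)
    (hdiv : ∑ a, p1 a * Real.log (p1 a / p0 a) > lam)
    (L : (n : ℕ) → (Fin n → A) → ℝ)
    -- strong pointwise universality: `max_x (Lₙ(x) + log P₁(x)) = o(n)`
    (hUniv : ∀ ε > (0:ℝ), ∃ n₀ : ℕ, ∀ n ≥ n₀, ∀ x : Fin n → A,
      |L n x + Real.log (∏ i : Fin n, p1 (x i))| ≤ n * ε)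
    (W : ℕ → Ω → ℝ)
    (hW : ∀ n ω, W n ω = -(L n (fun i : Fin n => X i ω))
      - Real.log (∏ i : Fin n, p0 (X i ω)) - n * (lam / 2))
    (α : ℝ) (hα : α ∈ Set.Ioo (0:ℝ) 1)
    (ε : ℝ) (hε : 0 < ε) (he2 : ε < lam / 2)
    (hDε : ∑ a, p1 a * Real.log (p1 a / p0 a) > lam / 2 + ε)
    (s : ℝ) (hs : 0 < s)
    (hroot : ∑ a, p1 a * Real.exp (-s * (Real.log (p1 a / p0 a) - lam / 2 - ε)) = 1) :
    -- `P₁(N⁰ < N¹) = O(β^s)` as `β → 0`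
    ∃ C : ℝ, 0 ≤ C ∧ ∃ β₀ ∈ Set.Ioo (0:ℝ) 1, ∀ β ∈ Set.Ioo (0:ℝ) β₀,
      μ {ω | ∃ n : ℕ, 1 ≤ n ∧ W n ω ≤ Real.log β ∧
              ∀ m : ℕ, 1 ≤ m → m ≤ n → W m ω < -Real.log α}
        ≤ ENNReal.ofReal (C * β ^ s) := by
  classical
  obtain ⟨n₀, hn₀⟩ := hUniv ε hε
  set Y : A → ℝ := fun a => Real.log (p1 a / p0 a) - lam / 2 - ε with hYdef
  set q : A → ℝ := fun a => p1 a * Real.exp (-s * Y a) with hqdef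
  have hqpos : ∀ a, 0 < q a := fun a => mul_pos (hp1pos a) (Real.exp_pos _)
  have hqsum : ∑ a, q a = 1 := hroot
  set n₁ : ℕ := max n₀ 1 with hn₁def
  -- the finitely many values of W for 1 ≤ n < n₁
  set V : Finset ℝ := (Finset.range n₁).biUnion
    (fun n => Finset.univ.image (fun x : Fin n → A =>
      -(L n x) - Real.log (∏ i : Fin n, p0 (x i)) - n * (lam / 2))) with hVdef
  set c : ℝ := if h : V.Nonempty then V.min' h else 0 with hcdef
  refine ⟨1, zero_le_one, min (1/2) (Real.exp (c - 1)), ⟨⟨lt_min (by norm_num) (Real.exp_pos _),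
    lt_of_le_of_lt (min_le_left _ _) (by norm_num)⟩, ?_⟩⟩
  rintro β ⟨hβ0, hββ₀⟩
  have hβs : (0:ℝ) < β ^ s := Real.rpow_pos_of_pos hβ0 s
  have hlogβ : Real.log β < c := by
    have h1 : Real.log β < Real.log (Real.exp (c - 1)) :=
      Real.log_lt_log hβ0 (lt_of_lt_of_le hββ₀ (min_le_right _ _))
    rw [Real.log_exp] at h1
    linarith
  -- partial sums of the random walk
  set S : ℕ → Ω → ℝ := fun m ω => ∑ i : Fin m, Y (X i ω) with hSdef
  -- W dominates S for n ≥ n₁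
  have hWS : ∀ n, n₁ ≤ n → ∀ ω, S n ω ≤ W n ω := by
    intro n hn ω
    set x : Fin n → A := fun i => X i ω with hxdef
    have h1 := hn₀ n (le_trans (le_max_left _ _) hn) x
    have hA1 : Real.log (∏ i : Fin n, p1 (x i)) = ∑ i : Fin n, Real.log (p1 (x i)) :=
      Real.log_prod (fun i _ => (hp1pos _).ne')
    have hA0 : Real.log (∏ i : Fin n, p0 (x i)) = ∑ i : Fin n, Real.log (p0 (x i)) :=
      Real.log_prod (fun i _ => (hp0pos _).ne')
    have hSx : S n ω = (∑ i : Fin n, Real.log (p1 (x i)))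
        - (∑ i : Fin n, Real.log (p0 (x i))) - n * (lam / 2 + ε) := by
      have e : ∀ i : Fin n, Y (X i ω)
          = Real.log (p1 (x i)) - Real.log (p0 (x i)) - (lam / 2 + ε) := by
        intro i
        simp only [hYdef, hxdef]
        rw [Real.log_div (hp1pos _).ne' (hp0pos _).ne']
        ring
      simp only [hSdef]
      rw [Finset.sum_congr rfl (fun i _ => e i)]
      rw [Finset.sum_sub_distrib, Finset.sum_sub_distrib, Finset.sum_const,
        Finset.card_univ, Fintype.card_fin, nsmul_eq_mul]
    have habs := (abs_le.1 h1).2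
    rw [hW n ω]
    have hLd : L n (fun i : Fin n => X i ω) = L n x := rfl
    have hPd : Real.log (∏ i : Fin n, p0 (X i ω)) = Real.log (∏ i : Fin n, p0 (x i)) := rfl
    rw [hLd, hPd]
    rw [hSx]
    have : L n x + Real.log (∏ i : Fin n, p1 (x i)) ≤ n * ε := habs
    rw [hA1] at this
    linarith
  -- first-crossing decomposition
  set D : ℕ → Set Ω := fun n => {ω | n₁ ≤ n ∧ S n ω ≤ Real.log β ∧
      ∀ m, n₁ ≤ m → m < n → Real.log β < S m ω} with hDdef
  have hsub : {ω | ∃ n : ℕ, 1 ≤ n ∧ W n ω ≤ Real.log β ∧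
      ∀ m : ℕ, 1 ≤ m → m ≤ n → W m ω < -Real.log α} ⊆ ⋃ n, D n := by
    rintro ω ⟨n, hn1, hWn, -⟩
    have hex : ∃ k, n₁ ≤ k ∧ S k ω ≤ Real.log β := by
      by_cases h : n₁ ≤ n
      · exact ⟨n, h, le_trans (hWS n h ω) hWn⟩
      · exfalso
        have hmem : (-(L n (fun i : Fin n => X i ω))
            - Real.log (∏ i : Fin n, p0 (X i ω)) - n * (lam / 2)) ∈ V := by
          refine Finset.mem_biUnion.2 ⟨n, Finset.mem_range.2 (not_le.1 h), ?_⟩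
          exact Finset.mem_image.2 ⟨fun i => X i ω, Finset.mem_univ _, rfl⟩
        have hVne : V.Nonempty := ⟨_, hmem⟩
        have hcW : c ≤ W n ω := by
          rw [hW n ω, hcdef, dif_pos hVne]
          exact Finset.min'_le _ _ hmem
        linarith
    set K := Nat.find hex with hKdef
    have hKspec := Nat.find_spec hex
    refine Set.mem_iUnion.2 ⟨K, hKspec.1, hKspec.2, ?_⟩
    intro m hm hmk
    by_contra hcon
    exact Nat.find_min hex hmk ⟨hm, not_lt.1 hcon⟩
  have hSmeas : ∀ m, Measurable (S m) := by
    intro m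
    apply Finset.measurable_sum
    intro i _
    exact (measurable_of_countable Y).comp (hXmeas i)
  have hDmeas : ∀ n, MeasurableSet (D n) := by
    intro n
    have hrw : D n = {ω : Ω | n₁ ≤ n} ∩ ({ω | S n ω ≤ Real.log β} ∩
        ⋂ m ∈ Finset.range n, {ω | n₁ ≤ m → Real.log β < S m ω}) := by
      ext ω
      simp only [hDdef, Set.mem_setOf_eq, Set.mem_inter_iff, Set.mem_iInter, Finset.mem_range]
      constructor
      · rintro ⟨h1, h2, h3⟩
        exact ⟨h1, h2, fun m hm hn₁m => h3 m hn₁m hm⟩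
      · rintro ⟨h1, h2, h3⟩
        exact ⟨h1, h2, fun m hn₁m hm => h3 m hm hn₁m⟩
    rw [hrw]
    refine (MeasurableSet.const _).inter (MeasurableSet.inter ?_ ?_)
    · exact measurableSet_le (hSmeas n) measurable_const
    · refine Set.Finite.measurableSet_biInter (Finset.range n).finite_toSet (fun m _ => ?_)
      by_cases h : n₁ ≤ m
      · have : {ω : Ω | n₁ ≤ m → Real.log β < S m ω} = {ω | Real.log β < S m ω} := by
          ext ω; simp [h]
        rw [this]
        exact measurableSet_lt measurable_const (hSmeas m)
      · have : {ω : Ω | n₁ ≤ m → Real.log β < S m ω} = Set.univ := by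
          ext ω; simp [h]
        rw [this]
        exact MeasurableSet.univ
  have hDdisj : Pairwise (Function.onFun Disjoint D) := by
    have key : ∀ n m, n < m → Disjoint (D n) (D m) := by
      intro n m h
      refine Set.disjoint_left.2 ?_
      rintro ω ⟨h1, h2, -⟩ ⟨-, -, h3'⟩
      exact absurd h2 (not_le.2 (h3' n h1 h))
    intro n m hnm
    rcases hnm.lt_or_gt with h | h
    · exact key n m h
    · exact (key m n h).symm
  -- crossing prefixes
  set F : (n : ℕ) → Finset (Fin n → A) := fun n =>
    Finset.univ.filter (fun y : Fin n → A => n₁ ≤ n ∧ (∑ i : Fin n, Y (y i)) ≤ Real.log β ∧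
      ∀ m, ∀ h : m < n, n₁ ≤ m →
        Real.log β < ∑ i : Fin m, Y (y (Fin.castLE (le_of_lt h) i))) with hFdef
  have hScyl : ∀ (n : ℕ) (y : Fin n → A) (ω : Ω), (∀ j : Fin n, X j ω = y j) →
      ∀ (m : ℕ) (h : m ≤ n), S m ω = ∑ i : Fin m, Y (y (Fin.castLE h i)) := by
    intro n y ω hxy m h
    refine Finset.sum_congr rfl fun i _ => ?_
    exact congrArg Y (hxy (Fin.castLE h i))
  have hDF : ∀ n, D n = ⋃ y ∈ F n, {ω | ∀ i : Fin n, X i ω = y i} := by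
    intro n
    ext ω
    simp only [hDdef, Set.mem_setOf_eq, Set.mem_iUnion, hFdef, Finset.mem_filter,
      Finset.mem_univ, true_and, exists_prop]
    constructor
    · rintro ⟨h1, h2, h3⟩
      refine ⟨fun i => X i ω, ⟨h1, ?_, ?_⟩, fun i => rfl⟩
      · exact h2
      · intro m hm hn₁m
        exact lt_of_lt_of_le (h3 m hn₁m hm) (le_of_eq (hScyl n _ ω (fun j => rfl) m (le_of_lt hm)))
    · rintro ⟨y, ⟨h1, h2, h3⟩, hxy⟩
      refine ⟨h1, ?_, ?_⟩
      · rw [hScyl n y ω hxy n le_rfl]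
        calc (∑ i : Fin n, Y (y (Fin.castLE le_rfl i))) = ∑ i : Fin n, Y (y i) :=
          Finset.sum_congr rfl fun i _ => rfl
        _ ≤ Real.log β := h2
      · intro m hn₁m hm
        rw [hScyl n y ω hxy m (le_of_lt hm)]
        exact h3 m hm hn₁m
  have hcylmeas : ∀ (n : ℕ) (y : Fin n → A),
      MeasurableSet {ω : Ω | ∀ i : Fin n, X i ω = y i} := by
    intro n y
    have : {ω : Ω | ∀ i : Fin n, X i ω = y i} = ⋂ i : Fin n, (X i) ⁻¹' {y i} := by
      ext ω; simp [Set.mem_iInter]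
    rw [this]
    exact MeasurableSet.iInter fun i => (hXmeas i) (measurableSet_singleton _)
  have hmuD : ∀ n, μ (D n) = ENNReal.ofReal (∑ y ∈ F n, ∏ i : Fin n, p1 (y i)) := by
    intro n
    rw [hDF n, measure_biUnion_finset ?_ (fun y _ => hcylmeas n y)]
    · rw [ENNReal.ofReal_sum_of_nonneg (fun y _ => Finset.prod_nonneg fun i _ => (hp1pos _).le)]
      exact Finset.sum_congr rfl fun y _ => hiid n y
    · intro y hy z hz hyz
      refine Set.disjoint_left.2 fun ω hω hω' => hyz (funext fun i => ?_)
      rw [← hω i, ← hω' i]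
  -- the basic Chernoff substitution bound on each crossing prefix
  have hFbound : ∀ n, ∀ y ∈ F n,
      (∏ i : Fin n, p1 (y i)) ≤ β ^ s * ∏ i : Fin n, q (y i) := by
    intro n y hy
    have h2 : (∑ i : Fin n, Y (y i)) ≤ Real.log β :=
      ((Finset.mem_filter.1 hy).2).2.1
    have hprod : (∏ i : Fin n, q (y i))
        = (∏ i : Fin n, p1 (y i)) * Real.exp (-s * ∑ i : Fin n, Y (y i)) := by
      simp only [hqdef]
      rw [Finset.prod_mul_distrib, Finset.mul_sum, ← Real.exp_sum]
    have hexp : Real.exp (Real.log β * (-s)) ≤ Real.exp (-s * ∑ i : Fin n, Y (y i)) := by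
      apply Real.exp_le_exp.2
      nlinarith
    have hp1n : (0:ℝ) ≤ ∏ i : Fin n, p1 (y i) := Finset.prod_nonneg fun i _ => (hp1pos _).le
    calc (∏ i : Fin n, p1 (y i)) = (∏ i : Fin n, p1 (y i)) * (β ^ s * β ^ (-s)) := by
          rw [← Real.rpow_add hβ0, add_neg_cancel, Real.rpow_zero, mul_one]
      _ = β ^ s * ((∏ i : Fin n, p1 (y i)) * β ^ (-s)) := by ring
      _ ≤ β ^ s * ((∏ i : Fin n, p1 (y i)) * Real.exp (-s * ∑ i : Fin n, Y (y i))) := by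
          apply mul_le_mul_of_nonneg_left _ hβs.le
          apply mul_le_mul_of_nonneg_left _ hp1n
          rw [Real.rpow_def_of_pos hβ0]
          exact hexp
      _ = β ^ s * ∏ i : Fin n, q (y i) := by rw [hprod]
  -- key finite-sum bound
  have key : ∀ t : Finset ℕ,
      (∑ n ∈ t, ∑ y ∈ F n, ∏ i : Fin n, p1 (y i)) ≤ β ^ s := by
    intro t
    have step1 : (∑ n ∈ t, ∑ y ∈ F n, ∏ i : Fin n, p1 (y i))
        ≤ β ^ s * ∑ n ∈ t, ∑ y ∈ F n, ∏ i : Fin n, q (y i) := by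
      rw [Finset.mul_sum]
      refine Finset.sum_le_sum fun n _ => ?_
      rw [Finset.mul_sum]
      exact Finset.sum_le_sum fun y hy => hFbound n y hy
    set N : ℕ := t.sup id with hNdef
    have htN : ∀ n ∈ t, n ≤ N := fun n hn => Finset.le_sup (f := id) hn
    set w : (Fin N → A) → ℝ := fun x => ∏ i : Fin N, q (x i) with hwdef
    have hwpos : ∀ x, 0 < w x := fun x => Finset.prod_pos fun i _ => hqpos _
    set J : ℕ → (Fin N → A) → ℝ := fun n x =>
      if h : n ≤ N then (if (fun i => x (Fin.castLE h i)) ∈ F n then w x else 0) else 0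
      with hJdef
    have hJle : ∀ n x, J n x ≤ w x := by
      intro n x
      simp only [hJdef]
      split_ifs <;> simp [le_refl, (hwpos x).le]
    have hJnonneg : ∀ n x, 0 ≤ J n x := by
      intro n x
      simp only [hJdef]
      split_ifs <;> simp [(hwpos x).le]
    have hJne : ∀ n x, J n x ≠ 0 → ∃ h : n ≤ N, (fun i => x (Fin.castLE h i)) ∈ F n := by
      intro n x hne
      by_cases h : n ≤ N
      · refine ⟨h, ?_⟩
        by_contra hmem
        exact hne (by simp [hJdef, dif_pos h, if_neg hmem])
      · exact absurd (by simp [hJdef, dif_neg h]) hne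
    have hdisjF : ∀ (n n' : ℕ) (h : n ≤ N) (h' : n' ≤ N) (x : Fin N → A),
        (fun i => x (Fin.castLE h i)) ∈ F n → (fun i => x (Fin.castLE h' i)) ∈ F n' → n = n' := by
      have main : ∀ (n n' : ℕ) (h : n ≤ N) (h' : n' ≤ N) (x : Fin N → A), n < n' →
          (fun i => x (Fin.castLE h i)) ∈ F n → (fun i => x (Fin.castLE h' i)) ∈ F n' → False := by
        intro n n' h h' x hlt hn hn'
        simp only [hFdef, Finset.mem_filter, Finset.mem_univ, true_and] at hn hn'
        obtain ⟨hn₁, hsum, -⟩ := hn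
        obtain ⟨-, -, hall⟩ := hn'
        have hgt := hall n hlt hn₁
        have heq : (∑ i : Fin n, Y (x (Fin.castLE h' (Fin.castLE (le_of_lt hlt) i))))
            = ∑ i : Fin n, Y (x (Fin.castLE h i)) :=
          Finset.sum_congr rfl fun i _ => congrArg (fun j => Y (x j)) (Fin.ext rfl)
        rw [heq] at hgt
        linarith
      intro n n' h h' x hn hn'
      by_contra hne
      rcases Ne.lt_or_gt hne with hlt | hlt
      · exact main n n' h h' x hlt hn hn'
      · exact main n' n h' h x hlt hn' hn
    have h1 : ∀ n ∈ t, (∑ y ∈ F n, ∏ i : Fin n, q (y i)) = ∑ x : Fin N → A, J n x := by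
      intro n hn
      have hnN := htN n hn
      have e1 : (∑ y ∈ F n, ∏ i : Fin n, q (y i))
          = ∑ y : Fin n → A, (if y ∈ F n then (1:ℝ) else 0) * ∏ i : Fin n, q (y i) := by
        rw [eq_comm]
        simp only [ite_mul, one_mul, zero_mul]
        rw [Finset.sum_ite_mem, Finset.univ_inter]
      rw [e1, ← aux_sum_extend q hqsum N n hnN (fun y => if y ∈ F n then (1:ℝ) else 0)]
      refine Finset.sum_congr rfl fun x _ => ?_
      simp only [hJdef, dif_pos hnN, hwdef, ite_mul, one_mul, zero_mul]
    have hinner : ∀ x : Fin N → A, (∑ n ∈ t, J n x) ≤ w x := by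
      intro x
      have hfilter : (∑ n ∈ t, J n x) = ∑ n ∈ t.filter (fun n => J n x ≠ 0), J n x :=
        (Finset.sum_filter_ne_zero t).symm
      have hcard : (t.filter (fun n => J n x ≠ 0)).card ≤ 1 := by
        refine Finset.card_le_one.2 fun a ha b hb => ?_
        obtain ⟨-, hane⟩ := Finset.mem_filter.1 ha
        obtain ⟨-, hbne⟩ := Finset.mem_filter.1 hb
        obtain ⟨hA, hma⟩ := hJne a x hane
        obtain ⟨hB, hmb⟩ := hJne b x hbne
        exact hdisjF a b hA hB x hma hmb
      rw [hfilter]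
      calc (∑ n ∈ t.filter (fun n => J n x ≠ 0), J n x)
          ≤ ∑ n ∈ t.filter (fun n => J n x ≠ 0), w x :=
            Finset.sum_le_sum fun n _ => hJle n x
        _ = (t.filter (fun n => J n x ≠ 0)).card • w x := by rw [Finset.sum_const]
        _ ≤ 1 • w x := by
            rcases Nat.le_one_iff_eq_zero_or_eq_one.1 hcard with h | h <;>
              simp [h, (hwpos x).le]
        _ = w x := one_smul _ _
    have step2 : (∑ n ∈ t, ∑ y ∈ F n, ∏ i : Fin n, q (y i)) ≤ 1 := by
      calc (∑ n ∈ t, ∑ y ∈ F n, ∏ i : Fin n, q (y i))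
          = ∑ n ∈ t, ∑ x : Fin N → A, J n x := Finset.sum_congr rfl h1
        _ = ∑ x : Fin N → A, ∑ n ∈ t, J n x := Finset.sum_comm
        _ ≤ ∑ x : Fin N → A, w x := Finset.sum_le_sum fun x _ => hinner x
        _ = (∑ a, q a) ^ N := (Fintype.sum_pow q N).symm
        _ = 1 := by rw [hqsum, one_pow]
    calc (∑ n ∈ t, ∑ y ∈ F n, ∏ i : Fin n, p1 (y i))
        ≤ β ^ s * ∑ n ∈ t, ∑ y ∈ F n, ∏ i : Fin n, q (y i) := step1
      _ ≤ β ^ s * 1 := mul_le_mul_of_nonneg_left step2 hβs.le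
      _ = β ^ s := mul_one _
  -- assemble
  calc μ {ω | ∃ n : ℕ, 1 ≤ n ∧ W n ω ≤ Real.log β ∧
          ∀ m : ℕ, 1 ≤ m → m ≤ n → W m ω < -Real.log α}
      ≤ μ (⋃ n, D n) := measure_mono hsub
    _ = ∑' n, μ (D n) := measure_iUnion hDdisj hDmeas
    _ ≤ ENNReal.ofReal (1 * β ^ s) := by
        rw [ENNReal.tsum_eq_iSup_sum]
        refine iSup_le fun t => ?_
        have : (∑ n ∈ t, μ (D n))
            = ENNReal.ofReal (∑ n ∈ t, ∑ y ∈ F n, ∏ i : Fin n, p1 (y i)) := by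
          rw [ENNReal.ofReal_sum_of_nonneg (fun n _ =>
            Finset.sum_nonneg fun y _ => Finset.prod_nonneg fun i _ => (hp1pos _).le)]
          exact Finset.sum_congr rfl fun n _ => hmuD n
        rw [this, one_mul]
        exact ENNReal.ofReal_le_ofReal (key t)
end

section
/- Under hypothesis H_0 with i.i.d. observations from P_0, suppose the universal code satisfies: N_0*(ε) = sup{n ≥ 1 : |-L_n(X_1^n) - log P_0(X_1^n)| > nε} is finite almost surely for every ε > 0. Define W_n = -L_n(X_1^n) - log P_0(X_1^n) - nλ/2 and N^0 = inf{n : W_n ≤ log β}. Then N^0 / |log β| → 2/λ almost surely as β → 0. -/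
open MeasureTheory ProbabilityTheory Filter Real

set_option maxHeartbeats 1600000 in
/-- Under `H₀`, if the code redundancy `Rₙ = -Lₙ(X₁ⁿ) - log P₀(X₁ⁿ)`
satisfies `N₀*(ε) = sup{n : |Rₙ| > nε} < ∞` a.s. for every `ε > 0`, then for
`Wₙ = Rₙ - nλ/2` and `N⁰(β) = inf{n : Wₙ ≤ log β}` we have
`N⁰(β)/|log β| → 2/λ` almost surely as `β → 0`. -/
theorem stmt5_H0_stopping_time_asymptotics
    {Ω : Type*} [MeasurableSpace Ω] (μ : Measure Ω) [IsProbabilityMeasure μ]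
    (R : ℕ → Ω → ℝ)
    -- a.s. finiteness of `N₀*(ε)` for every `ε > 0`
    (hR : ∀ᵐ ω ∂μ, ∀ ε > (0:ℝ), ∃ n₀ : ℕ, ∀ n ≥ n₀, |R n ω| ≤ n * ε)
    (lam : ℝ) (hlam : 0 < lam)
    (W : ℕ → Ω → ℝ) (hW : ∀ n ω, W n ω = R n ω - n * (lam / 2))
    (N0 : ℝ → Ω → ℕ)
    (hN0 : ∀ β ω, N0 β ω = sInf {n : ℕ | 1 ≤ n ∧ W n ω ≤ Real.log β}) :
    ∀ᵐ ω ∂μ, Tendsto (fun β : ℝ => (N0 β ω : ℝ) / |Real.log β|)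
      (nhdsWithin 0 (Set.Ioo (0:ℝ) 1)) (nhds (2 / lam)) := by
  filter_upwards [hR] with ω hω
  rw [Metric.tendsto_nhdsWithin_nhds]
  intro δ hδ
  set ε := min (lam / 4) (δ * lam ^ 2 / 32) with hε_def
  have hε : 0 < ε := lt_min (by positivity) (by positivity)
  have hε1 : ε ≤ lam / 4 := min_le_left _ _
  have hε2 : ε ≤ δ * lam ^ 2 / 32 := min_le_right _ _
  clear_value ε
  have hhalf : 0 < lam / 2 - ε := by linarith
  have hhalf' : 0 < lam / 2 + ε := by linarith
  have h_up : 1 / (lam / 2 - ε) ≤ 2 / lam + δ / 4 := by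
    have key : 2 / lam + δ / 4 = (8 + δ * lam) / (4 * lam) := by field_simp; ring
    rw [key, div_le_div_iff₀ hhalf (by positivity)]
    have hp : 0 ≤ δ * lam * (lam / 4 - ε) := by
      apply mul_nonneg (mul_nonneg hδ.le hlam.le); linarith
    nlinarith [hε2]
  have h_low : 2 / lam - δ / 4 ≤ 1 / (lam / 2 + ε) := by
    have key : 2 / lam - δ / 4 = (8 - δ * lam) / (4 * lam) := by field_simp; ring
    rw [key, div_le_div_iff₀ (by positivity) hhalf']
    have hp : 0 ≤ δ * lam * ε := by positivity
    nlinarith [hε2]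
  obtain ⟨n₀, hn₀⟩ := hω ε hε
  set C : ℝ := 1 + ∑ k ∈ Finset.range n₀, |W k ω| with hC_def
  have hCpos : 0 < C := by
    have : (0:ℝ) ≤ ∑ k ∈ Finset.range n₀, |W k ω| :=
      Finset.sum_nonneg fun k _ => abs_nonneg _
    simp only [hC_def]; linarith
  have hWC : ∀ n < n₀, -C ≤ W n ω := by
    intro n hn
    have h1 : |W n ω| ≤ ∑ k ∈ Finset.range n₀, |W k ω| :=
      Finset.single_le_sum (f := fun k => |W k ω|) (fun k _ => abs_nonneg _)
        (Finset.mem_range.mpr hn)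
    have h2 := neg_abs_le (W n ω)
    simp only [hC_def]; linarith
  set T : ℝ := max (max C (4 * (n₀ + 2) / δ)) 1 with hT_def
  have hT1 : (1:ℝ) ≤ T := le_max_right _ _
  have hTC : C ≤ T := le_trans (le_max_left _ _) (le_max_left _ _)
  have hTδ : 4 * (n₀ + 2) / δ ≤ T := le_trans (le_max_right _ _) (le_max_left _ _)
  clear_value T
  refine ⟨Real.exp (-T), Real.exp_pos _, ?_⟩
  rintro β ⟨hβ0, hβ1⟩ hdist
  have hβd : β < Real.exp (-T) := by
    rw [Real.dist_eq, sub_zero, abs_of_pos hβ0] at hdist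
    exact hdist
  have hlogβ : Real.log β < -T := by
    calc Real.log β < Real.log (Real.exp (-T)) := Real.log_lt_log hβ0 hβd
    _ = -T := Real.log_exp _
  set t : ℝ := -Real.log β with ht_def
  clear_value t
  have htT : T < t := by simp only [ht_def]; linarith
  have ht0 : 0 < t := by linarith
  have hlogneg : Real.log β < 0 := by linarith
  have habs : |Real.log β| = t := by rw [abs_of_neg hlogneg, ht_def]
  -- the set
  set S : Set ℕ := {n : ℕ | 1 ≤ n ∧ W n ω ≤ Real.log β} with hS_def
  -- witness m in S
  set m : ℕ := n₀ + ⌈t / (lam / 2 - ε)⌉₊ + 1 with hm_def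
  clear_value m
  have hmt : t / (lam / 2 - ε) ≤ (m : ℝ) := by
    have h1 : t / (lam / 2 - ε) ≤ (⌈t / (lam / 2 - ε)⌉₊ : ℝ) := Nat.le_ceil _
    have h2 : ((⌈t / (lam / 2 - ε)⌉₊ : ℕ) : ℝ) ≤ (m : ℝ) := by
      simp only [hm_def]; push_cast; linarith [Nat.cast_nonneg (α := ℝ) n₀]
    linarith
  have hmS : m ∈ S := by
    constructor
    · simp only [hm_def]; omega
    · have hmn₀ : n₀ ≤ m := by simp only [hm_def]; omega
      have hR' := hn₀ m hmn₀
      have h1 : R m ω ≤ (m : ℝ) * ε := (abs_le.mp hR').2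
      have h2 : t ≤ (m : ℝ) * (lam / 2 - ε) := by
        rw [div_le_iff₀ hhalf] at hmt; linarith
      rw [hW]
      have hlb : Real.log β = -t := by rw [ht_def]; ring
      rw [hlb]; nlinarith
  have hSne : S.Nonempty := ⟨m, hmS⟩
  have hNS : N0 β ω ∈ S := by rw [hN0]; exact Nat.sInf_mem hSne
  have hNm : N0 β ω ≤ m := by rw [hN0]; exact Nat.sInf_le hmS
  -- upper numeric bound
  have hNup : (N0 β ω : ℝ) ≤ t / (lam / 2 - ε) + (n₀ + 2) := by
    have h1 : ((⌈t / (lam / 2 - ε)⌉₊ : ℕ) : ℝ) < t / (lam / 2 - ε) + 1 :=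
      Nat.ceil_lt_add_one (by positivity)
    have h2 : ((N0 β ω : ℕ) : ℝ) ≤ (m : ℝ) := Nat.cast_le.mpr hNm
    simp only [hm_def] at h2; push_cast at h2
    linarith
  clear hmt hm_def hS_def hε_def hT_def hC_def hN0 hω hR hdist hβd hNm hmS hSne
  obtain ⟨hN1, hNW⟩ := hNS
  clear m S
  have hlb : Real.log β = -t := by rw [ht_def]; ring
  have hNWt : W (N0 β ω) ω ≤ -t := by rw [hlb] at hNW; exact hNW
  -- lower bound: N0 β ω ≥ n₀
  have hNn₀ : n₀ ≤ N0 β ω := by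
    by_contra h
    push_neg at h
    have h1 := hWC _ h
    linarith
  have hRN := hn₀ _ hNn₀
  have hNlow : t / (lam / 2 + ε) ≤ (N0 β ω : ℝ) := by
    have h1 : -((N0 β ω : ℝ)) * ε ≤ R (N0 β ω) ω := by
      have := (abs_le.mp hRN).1; linarith
    have h2 : W (N0 β ω) ω = R (N0 β ω) ω - (N0 β ω : ℝ) * (lam / 2) := hW _ _
    have h3 : t ≤ (N0 β ω : ℝ) * (lam / 2 + ε) := by nlinarith
    rw [div_le_iff₀ hhalf']; linarith
  -- key fraction estimates
  -- combine
  rw [Real.dist_eq, habs, abs_lt]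
  have hdivlow : 1 / (lam / 2 + ε) ≤ (N0 β ω : ℝ) / t := by
    rw [div_le_div_iff₀ hhalf' ht0]
    rw [div_le_iff₀ hhalf'] at hNlow
    linarith
  have hdivup : (N0 β ω : ℝ) / t ≤ 1 / (lam / 2 - ε) + ((n₀ : ℝ) + 2) / t := by
    have e1 : (1 / (lam / 2 - ε) + ((n₀ : ℝ) + 2) / t) * t
        = t / (lam / 2 - ε) + ((n₀ : ℝ) + 2) := by field_simp
    rw [div_le_iff₀ ht0, e1]; linarith
  have hn₀t : ((n₀ : ℝ) + 2) / t ≤ δ / 4 := by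
    rw [div_le_iff₀ ht0]
    have h4 : 4 * ((n₀:ℝ) + 2) / δ < t := lt_of_le_of_lt hTδ htT
    rw [div_lt_iff₀ hδ] at h4
    linarith
  constructor
  · linarith
  · linarith
end

section
/- Let X_1, X_2, ... be i.i.d. on a finite alphabet A with distribution P, and let P_c(x_1^n) = Π_{t=1}^n (v(x_t | x_1^{t-1}) + 1/2)/(t - 1 + |A|/2) be the Krichevsky–Trofimov estimator, where v(i | x_1^{t-1}) counts occurrences of symbol i in x_1^{t-1}. Then the pointwise redundancy satisfies (1/n)(-log P_c(X_1^n) + log P(X_1^n)) = O(log n / n) uniformly over sequences, and in particular -（1/n) log P_c(X_1^n) → H(P) almost surely, where H(P) is the entropy of P. -/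
open MeasureTheory ProbabilityTheory Filter Real

set_option linter.unusedSectionVars false
set_option maxHeartbeats 1000000

section KTaux
open Finset

lemma kt_exp_le (v : ℕ) (hv : 1 ≤ v) : Real.exp 1 ≤ (((v:ℝ)+1)/v)^(v+1) := by
  have hvr : (0:ℝ) < v := by exact_mod_cast hv
  have h2 : Real.exp (1/((v:ℝ)+1)) ≤ ((v:ℝ)+1)/v := by
    have hle : (v:ℝ)/((v:ℝ)+1) ≤ Real.exp (-(1/((v:ℝ)+1))) := by
      have h := Real.add_one_le_exp (-(1/((v:ℝ)+1)))
      have hval : -(1/((v:ℝ)+1)) + 1 = v/((v:ℝ)+1) := by field_simp; ring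
      linarith [hval ▸ h]
    rw [Real.exp_neg] at hle
    rw [le_inv_comm₀ (by positivity) (Real.exp_pos _)] at hle
    calc Real.exp (1/((v:ℝ)+1)) ≤ ((v:ℝ)/((v:ℝ)+1))⁻¹ := hle
      _ = ((v:ℝ)+1)/v := by rw [inv_div]
  have hp := pow_le_pow_left₀ (Real.exp_pos _).le h2 (v+1)
  rw [← Real.exp_nat_mul] at hp
  rw [show ((v+1:ℕ):ℝ) * (1/((v:ℝ)+1)) = 1 by push_cast; field_simp] at hp
  exact hp

-- (v:ℝ)^v ≤ exp v * v!
lemma kt_pow_le_exp_factorial : ∀ v : ℕ, (v:ℝ)^v ≤ Real.exp v * v.factorial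
  | 0 => by simp
  | (v+1) => by
    have IH := kt_pow_le_exp_factorial v
    have h1 : ((v:ℝ)+1)^v ≤ Real.exp 1 * (v:ℝ)^v := by
      rcases Nat.eq_zero_or_pos v with h | h
      · simp only [h, pow_zero, Nat.cast_zero, mul_one]; exact Real.one_le_exp zero_le_one
      · have hv : (0:ℝ) < v := by exact_mod_cast h
        have h0 : ((v:ℝ)+1) ≤ (v:ℝ) * Real.exp (1/v) := by
          have h := Real.add_one_le_exp (1/(v:ℝ))
          have := mul_le_mul_of_nonneg_left h hv.le
          calc ((v:ℝ)+1) = v * (1/(v:ℝ) + 1) := by field_simp; ring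
            _ ≤ v * Real.exp (1/v) := this
        calc ((v:ℝ)+1)^v ≤ ((v:ℝ) * Real.exp (1/v))^v := by
              apply pow_le_pow_left₀ (by positivity) h0
          _ = (v:ℝ)^v * Real.exp (1/v) ^ v := by rw [mul_pow]
          _ = (v:ℝ)^v * Real.exp 1 := by
              rw [← Real.exp_nat_mul, mul_one_div, div_self (ne_of_gt hv)]
          _ = Real.exp 1 * (v:ℝ)^v := by ring
    have key : ((v:ℝ)+1)^(v+1) ≤ Real.exp ((v:ℝ)+1) * (((v+1).factorial : ℕ):ℝ) := by
      calc ((v:ℝ)+1)^(v+1) = ((v:ℝ)+1)^v * ((v:ℝ)+1) := by ring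
        _ ≤ Real.exp 1 * (v:ℝ)^v * ((v:ℝ)+1) := by
            apply mul_le_mul_of_nonneg_right h1 (by positivity)
        _ ≤ Real.exp 1 * (Real.exp v * v.factorial) * ((v:ℝ)+1) := by
            apply mul_le_mul_of_nonneg_right (mul_le_mul_of_nonneg_left IH (Real.exp_pos 1).le) (by positivity)
        _ = Real.exp ((v:ℝ)+1) * ((v+1).factorial) := by
            rw [Real.exp_add, Nat.factorial_succ]; push_cast; ring
    push_cast at key ⊢
    exact key

-- v! * exp v ≤ exp 1 * v * v^v  for v ≥ 1
lemma kt_factorial_le (v : ℕ) (hv : 1 ≤ v) :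
    (v.factorial:ℝ) * Real.exp v ≤ Real.exp 1 * v * (v:ℝ)^v := by
  induction v, hv using Nat.le_induction with
  | base => simp
  | succ v hv IH =>
    have hvr : (0:ℝ) < v := by exact_mod_cast hv
    have key : Real.exp 1 * (v:ℝ) * (v:ℝ)^v ≤ ((v:ℝ)+1)^(v+1) := by
      have h3 := kt_exp_le v hv
      calc Real.exp 1 * (v:ℝ) * (v:ℝ)^v ≤ (((v:ℝ)+1)/v)^(v+1) * (v:ℝ) * (v:ℝ)^v := by
            apply mul_le_mul_of_nonneg_right (mul_le_mul_of_nonneg_right h3 (by positivity)) (by positivity)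
        _ = ((v:ℝ)+1)^(v+1) * ((v:ℝ)^(v+1) / (v:ℝ)^(v+1)) := by
            rw [div_pow]; ring
        _ = ((v:ℝ)+1)^(v+1) := by rw [div_self (by positivity), mul_one]
    have step : (((v+1).factorial:ℕ):ℝ) * Real.exp ((v:ℝ)+1) ≤ Real.exp 1 * ((v:ℝ)+1) * ((v:ℝ)+1)^(v+1) := by
      calc (((v+1).factorial:ℕ):ℝ) * Real.exp ((v:ℝ)+1)
          = ((v:ℝ)+1) * ((v.factorial:ℝ) * Real.exp v) * Real.exp 1 := by
            rw [Nat.factorial_succ, Real.exp_add]; push_cast; ring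
        _ ≤ ((v:ℝ)+1) * (Real.exp 1 * v * (v:ℝ)^v) * Real.exp 1 := by
            apply mul_le_mul_of_nonneg_right (mul_le_mul_of_nonneg_left IH (by positivity)) (Real.exp_pos 1).le
        _ = Real.exp 1 * ((v:ℝ)+1) * (Real.exp 1 * (v:ℝ) * (v:ℝ)^v) := by ring
        _ ≤ Real.exp 1 * ((v:ℝ)+1) * ((v:ℝ)+1)^(v+1) := by
            apply mul_le_mul_of_nonneg_left key (by positivity)
    push_cast at step ⊢
    exact step
open Finset Real

noncomputable def aKT (v : ℕ) : ℝ := ∏ j ∈ Finset.range v, ((j:ℝ) + 1/2)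

lemma aKT_pos (v : ℕ) : 0 < aKT v := Finset.prod_pos (fun j _ => by positivity)

lemma aKT_succ (v : ℕ) : aKT (v+1) = aKT v * ((v:ℝ) + 1/2) := Finset.prod_range_succ _ _

lemma aKT_le_factorial (v : ℕ) : aKT v ≤ (v.factorial : ℝ) := by
  induction v with
  | zero => simp [aKT]
  | succ v IH =>
    rw [aKT_succ, Nat.factorial_succ]
    push_cast
    have := aKT_pos v
    nlinarith [v.factorial_pos, (show (0:ℝ) < v.factorial by exact_mod_cast v.factorial_pos)]

lemma aKT_eq (v : ℕ) : aKT v = ((2*v).factorial : ℝ) / (4^v * v.factorial) := by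
  induction v with
  | zero => simp [aKT]
  | succ v IH =>
    rw [aKT_succ, IH]
    have h1 : (2*(v+1)) = (2*v+1) + 1 := by ring
    rw [h1, Nat.factorial_succ, Nat.factorial_succ, Nat.factorial_succ]
    push_cast
    have h2 : (0:ℝ) < (v.factorial:ℝ) := by exact_mod_cast v.factorial_pos
    field_simp
    ring

lemma factorial_le_aKT (v : ℕ) : (v.factorial : ℝ) ≤ (2*(v:ℝ)+1) * aKT v := by
  rw [aKT_eq]
  have hb := Nat.four_pow_le_two_mul_add_one_mul_central_binom v
  have hc : ((2*v).factorial : ℕ) = (2*v).choose v * v.factorial * v.factorial := by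
    rw [← Nat.choose_mul_factorial_mul_factorial (by omega : v ≤ 2*v)]
    congr 2
    omega
  have hb' : (4:ℝ)^v ≤ (2*(v:ℝ)+1) * ((2*v).choose v : ℝ) := by exact_mod_cast hb
  have hfp : (0:ℝ) < (v.factorial:ℝ) := by exact_mod_cast v.factorial_pos
  rw [mul_div_assoc', le_div_iff₀ (by positivity)]
  calc (v.factorial:ℝ) * (4^v * v.factorial) = (4:ℝ)^v * (v.factorial * v.factorial) := by ring
    _ ≤ ((2*(v:ℝ)+1) * ((2*v).choose v : ℝ)) * (v.factorial * v.factorial) := by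
        apply mul_le_mul_of_nonneg_right hb' (by positivity)
    _ = ((2*v).factorial : ℝ) * ((2*(v:ℝ)+1)) := by
        rw [show ((2*v).factorial : ℝ) = (((2*v).choose v : ℕ):ℝ) * v.factorial * v.factorial by exact_mod_cast congrArg (Nat.cast : ℕ → ℝ) hc]
        ring
    _ = (2*(v:ℝ)+1) * ((2*v).factorial : ℝ) := by ring

noncomputable def DKT (k n : ℕ) : ℝ := ∏ t ∈ Finset.range n, ((t:ℝ) + (k:ℝ)/2)

lemma DKT_pos (k n : ℕ) (hk : 1 ≤ k) : 0 < DKT k n := by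
  apply Finset.prod_pos
  intro j _
  have : (1:ℝ) ≤ k := by exact_mod_cast hk
  positivity

lemma DKT_le_factorial (k n : ℕ) : DKT k n ≤ ((n+k).factorial : ℝ) := by
  induction n with
  | zero =>
    simp only [DKT, Finset.range_zero, Finset.prod_empty, Nat.zero_add]
    exact_mod_cast Nat.succ_le_of_lt k.factorial_pos
  | succ n IH =>
    have h1 : DKT k (n+1) = DKT k n * ((n:ℝ) + k/2) := Finset.prod_range_succ _ _
    have h2 : (0:ℝ) ≤ (n:ℝ) + k/2 := by positivity
    have h3 : (n:ℝ) + (k:ℝ)/2 ≤ ((n+k:ℕ):ℝ) + 1 := by push_cast; linarith [Nat.cast_nonneg (α := ℝ) k]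
    calc DKT k (n+1) = DKT k n * ((n:ℝ) + k/2) := h1
      _ ≤ ((n+k).factorial : ℝ) * (((n+k:ℕ):ℝ) + 1) := by
          apply mul_le_mul IH h3 h2 (by positivity)
      _ = ((n+1+k).factorial : ℝ) := by
          rw [show n+1+k = (n+k)+1 by ring, Nat.factorial_succ]; push_cast; ring

lemma aKT_le_DKT (k n : ℕ) (hk : 1 ≤ k) : aKT n ≤ DKT k n := by
  apply Finset.prod_le_prod (fun j _ => by positivity)
  intro j _
  have : (1:ℝ) ≤ k := by exact_mod_cast hk
  linarith

section counts
variable {A : Type*} [Fintype A] [DecidableEq A]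

def cnt (x : ℕ → A) (n : ℕ) (a : A) : ℕ := ((Finset.range n).filter (fun i => x i = a)).card

lemma cnt_le (x : ℕ → A) (n : ℕ) (a : A) : cnt x n a ≤ n := by
  simpa [cnt] using (Finset.card_filter_le (Finset.range n) _)

lemma sum_cnt (x : ℕ → A) (n : ℕ) : ∑ a, cnt x n a = n := by
  have h := Finset.card_eq_sum_card_fiberwise (s := Finset.range n) (t := Finset.univ)
    (f := x) (fun i _ => Finset.mem_univ (x i))
  simpa [cnt, Finset.card_range] using h.symm

lemma cnt_succ (x : ℕ → A) (n : ℕ) (a : A) :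
    cnt x (n+1) a = cnt x n a + if a = x n then 1 else 0 := by
  unfold cnt
  rw [Finset.range_add_one, Finset.filter_insert]
  by_cases h : x n = a
  · rw [if_pos h, if_pos h.symm, Finset.card_insert_of_notMem (by simp)]
  · rw [if_neg h, if_neg (fun h' => h h'.symm), add_zero]

lemma prod_pow_cnt (x : ℕ → A) (n : ℕ) (f : A → ℝ) :
    ∏ i ∈ Finset.range n, f (x i) = ∏ a, (f a) ^ (cnt x n a) := by
  rw [← Finset.prod_fiberwise_of_maps_to (fun i _ => Finset.mem_univ (x i)) (fun i => f (x i))]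
  apply Finset.prod_congr rfl
  intro a _
  rw [show (f a) ^ (cnt x n a) = ∏ _i ∈ (Finset.range n).filter (fun i => x i = a), f a from (Finset.prod_const _).symm]
  apply Finset.prod_congr rfl
  intro i hi
  rw [(Finset.mem_filter.mp hi).2]

lemma kt_numerator (x : ℕ → A) (n : ℕ) :
    ∏ t ∈ Finset.range n, ((cnt x t (x t) : ℝ) + 1/2) = ∏ a, aKT (cnt x n a) := by
  induction n with
  | zero => simp [cnt, aKT]
  | succ n IH =>
    rw [Finset.prod_range_succ, IH]
    have : ∀ a, aKT (cnt x (n+1) a)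
        = aKT (cnt x n a) * (if a = x n then ((cnt x n a : ℝ) + 1/2) else 1) := by
      intro a
      rw [cnt_succ]
      by_cases h : a = x n
      · simp [h, aKT_succ]
      · simp [h]
    rw [Finset.prod_congr rfl (fun a _ => this a), Finset.prod_mul_distrib,
      Finset.prod_ite_eq' Finset.univ (x n) (fun a => ((cnt x n a : ℝ) + 1/2))]
    simp

lemma kt_identity (x : ℕ → A) (n : ℕ) :
    ∏ t ∈ Finset.range n,
      (((((Finset.range t).filter fun i => x i = x t).card : ℝ) + 1/2) / ((t:ℝ) + (Fintype.card A : ℝ)/2))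
    = (∏ a, aKT (cnt x n a)) / DKT (Fintype.card A) n := by
  have hrw : ∀ t : ℕ, ((((Finset.range t).filter fun i => x i = x t).card : ℝ) + 1/2)
      = ((cnt x t (x t) : ℝ) + 1/2) := fun t => rfl
  rw [Finset.prod_div_distrib]
  rw [Finset.prod_congr rfl (fun t _ => hrw t), kt_numerator]
  rfl

end counts

-- Gibbs inequality
lemma kt_gibbs {A : Type*} [Fintype A] (p : A → ℝ) (hp : ∀ a, 0 < p a)
    (hs : ∑ a, p a = 1) (v : A → ℕ) (n : ℕ) (hn : 1 ≤ n) (hv : ∑ a, (v a) = n) :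
    ∑ a, (v a : ℝ) * Real.log (p a) ≤ ∑ a, (v a : ℝ) * Real.log (v a) - n * Real.log n := by
  have hnr : (0:ℝ) < n := by exact_mod_cast hn
  have key : ∀ a, (v a : ℝ) * Real.log (p a) + (v a : ℝ) * Real.log n - (v a : ℝ) * Real.log (v a)
      ≤ (n:ℝ) * p a - v a := by
    intro a
    rcases Nat.eq_zero_or_pos (v a) with h | h
    · simp only [h, Nat.cast_zero, zero_mul, add_zero, sub_zero, zero_add, zero_sub]
      have := (hp a).le
      nlinarith
    · have hvr : (0:ℝ) < v a := by exact_mod_cast h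
      have hlog : Real.log (p a) + Real.log n - Real.log (v a)
          = Real.log (p a * n / v a) := by
        rw [Real.log_div (mul_pos (hp a) hnr).ne' hvr.ne', Real.log_mul (ne_of_gt (hp a)) (ne_of_gt hnr)]
      have hle := Real.log_le_sub_one_of_pos (div_pos (mul_pos (hp a) hnr) hvr)
      calc (v a : ℝ) * Real.log (p a) + (v a : ℝ) * Real.log n - (v a : ℝ) * Real.log (v a)
          = (v a : ℝ) * (Real.log (p a * n / v a)) := by rw [← hlog]; ring
        _ ≤ (v a : ℝ) * (p a * n / v a - 1) := by
            apply mul_le_mul_of_nonneg_left hle hvr.le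
        _ = (n:ℝ) * p a - v a := by field_simp
  have hsum := Finset.sum_le_sum (fun a (_ : a ∈ Finset.univ) => key a)
  have h1 : ∑ a, ((n:ℝ) * p a - (v a : ℝ)) = 0 := by
    rw [Finset.sum_sub_distrib, ← Finset.mul_sum, hs]
    have : ∑ a, (v a : ℝ) = (n:ℝ) := by exact_mod_cast congrArg (Nat.cast : ℕ → ℝ) hv
    rw [this]; ring
  have h2 : ∑ a, ((v a:ℝ) * Real.log (p a) + (v a : ℝ) * Real.log n - (v a:ℝ) * Real.log (v a))
      = ∑ a, (v a:ℝ) * Real.log (p a) + (n:ℝ) * Real.log n - ∑ a, (v a:ℝ) * Real.log (v a) := by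
    rw [Finset.sum_sub_distrib, Finset.sum_add_distrib, ← Finset.sum_mul]
    congr 3
    exact_mod_cast congrArg (Nat.cast : ℕ → ℝ) hv
  rw [h2, h1] at hsum
  linarith

-- log versions of Stirling bounds
lemma log_factorial_ge (v : ℕ) : (v:ℝ) * Real.log v - v ≤ Real.log (v.factorial) := by
  have h := kt_pow_le_exp_factorial v
  have h0 : (0:ℝ) < (v:ℝ)^v := by
    rcases Nat.eq_zero_or_pos v with h' | h'
    · simp [h']
    · have : (0:ℝ) < v := by exact_mod_cast h'
      positivity
  have := Real.log_le_log h0 h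
  rw [Real.log_pow, Real.log_mul (Real.exp_ne_zero _) (by exact_mod_cast v.factorial_pos.ne'),
    Real.log_exp] at this
  linarith

lemma log_factorial_le (v : ℕ) : Real.log (v.factorial) ≤ (v:ℝ) * Real.log v - v + 1 + Real.log ((v:ℝ)+1) := by
  rcases Nat.eq_zero_or_pos v with h | h
  · simp [h]
  · have hvr : (0:ℝ) < v := by exact_mod_cast h
    have hf := kt_factorial_le v h
    have hfp : (0:ℝ) < (v.factorial : ℝ) := by exact_mod_cast v.factorial_pos
    have hl := Real.log_le_log (by positivity) hf
    rw [Real.log_mul (by positivity) (Real.exp_ne_zero _), Real.log_exp,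
      Real.log_mul (by positivity) (by positivity), Real.log_mul (Real.exp_ne_zero _) hvr.ne',
      Real.log_exp, Real.log_pow] at hl
    have hmono : Real.log v ≤ Real.log ((v:ℝ)+1) := Real.log_le_log hvr (by linarith)
    linarith

lemma log_aKT_ge (v n : ℕ) (h : v ≤ n) :
    (v:ℝ) * Real.log v - v - Real.log (2*(n:ℝ)+1) ≤ Real.log (aKT v) := by
  have h1 := factorial_le_aKT v
  have hfp : (0:ℝ) < (v.factorial : ℝ) := by exact_mod_cast v.factorial_pos
  have hl := Real.log_le_log hfp h1
  rw [Real.log_mul (by positivity) (aKT_pos v).ne'] at hl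
  have h2 : Real.log (2*(v:ℝ)+1) ≤ Real.log (2*(n:ℝ)+1) := by
    apply Real.log_le_log (by positivity)
    have : (v:ℝ) ≤ n := by exact_mod_cast h
    linarith
  have h3 := log_factorial_ge v
  linarith

lemma log_aKT_le (v : ℕ) : Real.log (aKT v) ≤ (v:ℝ) * Real.log v - v + 1 + Real.log ((v:ℝ)+1) := by
  have := Real.log_le_log (aKT_pos v) (aKT_le_factorial v)
  linarith [log_factorial_le v]

lemma log_DKT_le (k n : ℕ) (hk : 1 ≤ k) :
    Real.log (DKT k n) ≤ ((n:ℝ)+k) * Real.log ((n:ℝ)+k) - ((n:ℝ)+k) + 1 + Real.log ((n:ℝ)+k+1) := by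
  have h1 := Real.log_le_log (DKT_pos k n hk) (DKT_le_factorial k n)
  have h2 := log_factorial_le (n+k)
  push_cast at h2
  linarith

lemma log_DKT_ge (k n : ℕ) (hk : 1 ≤ k) :
    (n:ℝ) * Real.log n - n - Real.log (2*(n:ℝ)+1) ≤ Real.log (DKT k n) := by
  have h1 := Real.log_le_log (aKT_pos n) (aKT_le_DKT k n hk)
  have h2 := log_aKT_ge n n (le_refl n)
  linarith

section main_bounds
variable {A : Type*} [Fintype A] [Nonempty A] [DecidableEq A]

lemma log_prod_p (p : A → ℝ) (hp : ∀ a, 0 < p a) (x : ℕ → A) (n : ℕ) :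
    Real.log (∏ i ∈ Finset.range n, p (x i)) = ∑ a, (cnt x n a : ℝ) * Real.log (p a) := by
  rw [prod_pow_cnt x n p, Real.log_prod (fun a _ => (pow_pos (hp a) _).ne')]
  congr 1
  ext a
  rw [Real.log_pow]

lemma log_kt_eq (x : ℕ → A) (n : ℕ) :
    Real.log ((∏ a, aKT (cnt x n a)) / DKT (Fintype.card A) n)
    = ∑ a, Real.log (aKT (cnt x n a)) - Real.log (DKT (Fintype.card A) n) := by
  have hk : 1 ≤ Fintype.card A := Fintype.card_pos
  rw [Real.log_div (Finset.prod_pos (fun a _ => aKT_pos _)).ne' (DKT_pos _ n hk).ne',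
    Real.log_prod (fun a _ => (aKT_pos _).ne')]

-- Upper bound on redundancy (count form)
lemma kt_upper (p : A → ℝ) (hp : ∀ a, 0 < p a) (hs : ∑ a, p a = 1)
    (x : ℕ → A) (n : ℕ) (hn : 1 ≤ n) :
    Real.log (∏ i ∈ Finset.range n, p (x i))
      - Real.log ((∏ a, aKT (cnt x n a)) / DKT (Fintype.card A) n)
    ≤ ((Fintype.card A : ℝ) + 1 + (Fintype.card A) * Real.log ((Fintype.card A) + 1)
        + (Fintype.card A) * Real.log 3 + Real.log ((Fintype.card A) + 2))
      + (2*(Fintype.card A : ℝ) + 1) * Real.log n := by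
  set k := Fintype.card A with hkdef
  have hk : 1 ≤ k := Fintype.card_pos
  have hkr : (1:ℝ) ≤ k := by exact_mod_cast hk
  have hnr : (0:ℝ) < n := by exact_mod_cast hn
  set v := cnt x n with hvdef
  have hvsum : ∑ a, v a = n := sum_cnt x n
  -- Gibbs
  have hgibbs := kt_gibbs p hp hs v n hn hvsum
  rw [log_prod_p p hp x n, log_kt_eq x n]
  -- lower bound on sum of log aKT
  have hlogaKT : ∑ a, ((v a : ℝ) * Real.log (v a) - v a - Real.log (2*(n:ℝ)+1))
      ≤ ∑ a, Real.log (aKT (v a)) :=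
    Finset.sum_le_sum (fun a _ => log_aKT_ge (v a) n (cnt_le x n a))
  have hsumv : ∑ a, (v a : ℝ) = (n:ℝ) := by exact_mod_cast congrArg (Nat.cast : ℕ → ℝ) hvsum
  have hsum1 : ∑ a, ((v a : ℝ) * Real.log (v a) - v a - Real.log (2*(n:ℝ)+1))
      = ∑ a, (v a : ℝ) * Real.log (v a) - n - k * Real.log (2*(n:ℝ)+1) := by
    rw [Finset.sum_sub_distrib, Finset.sum_sub_distrib, hsumv, Finset.sum_const]
    simp [hkdef]
  have hDKT := log_DKT_le k n hk
  -- (n+k) log (n+k) ≤ n log n + k + k log(n+k)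
  have hshift : ((n:ℝ)+k) * Real.log ((n:ℝ)+k) ≤ (n:ℝ) * Real.log n + k + k * Real.log ((n:ℝ)+k) := by
    have h1 : Real.log ((n:ℝ)+k) - Real.log n = Real.log (((n:ℝ)+k)/n) := by
      rw [Real.log_div (by positivity) hnr.ne']
    have h2 := Real.log_le_sub_one_of_pos (show (0:ℝ) < ((n:ℝ)+k)/n by positivity)
    have h3 : (((n:ℝ)+k)/n - 1) = k/n := by field_simp; ring
    have h4 : Real.log ((n:ℝ)+k) - Real.log n ≤ k/n := by rw [h1]; linarith
    have h5 : (n:ℝ) * (Real.log ((n:ℝ)+k) - Real.log n) ≤ n * (k/n) :=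
      mul_le_mul_of_nonneg_left h4 hnr.le
    have h6 : (n:ℝ) * (k/n) = k := by field_simp
    nlinarith
  -- log bounds in terms of log n
  have hn1 : (1:ℝ) ≤ (n:ℝ) := by exact_mod_cast hn
  have hk0 : (0:ℝ) ≤ (k:ℝ) := by positivity
  have hkn1 : (k:ℝ) * 1 ≤ (k:ℝ) * n := mul_le_mul_of_nonneg_left hn1 hk0
  have hlog1 : Real.log ((n:ℝ)+k) ≤ Real.log ((k:ℝ)+1) + Real.log n := by
    rw [← Real.log_mul (by positivity) hnr.ne']
    apply Real.log_le_log (by positivity)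
    nlinarith
  have hlog2 : Real.log (2*(n:ℝ)+1) ≤ Real.log 3 + Real.log n := by
    rw [← Real.log_mul (by norm_num) hnr.ne']
    apply Real.log_le_log (by positivity)
    linarith
  have hlog3 : Real.log ((n:ℝ)+k+1) ≤ Real.log ((k:ℝ)+2) + Real.log n := by
    rw [← Real.log_mul (by positivity) hnr.ne']
    apply Real.log_le_log (by positivity)
    nlinarith
  have hkn : (0:ℝ) ≤ k := by positivity
  nlinarith [hgibbs, hlogaKT, hsum1, hDKT, hshift, hlog1, hlog2, hlog3,
    mul_le_mul_of_nonneg_left hlog1 hkn, mul_le_mul_of_nonneg_left hlog2 hkn]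

-- Lower bound: log Pc ≤ ∑ v log v − n log n + (k + k log(n+1) + log(2n+1))
lemma kt_lower (x : ℕ → A) (n : ℕ) (hn : 1 ≤ n) :
    Real.log ((∏ a, aKT (cnt x n a)) / DKT (Fintype.card A) n)
    ≤ ∑ a, (cnt x n a : ℝ) * Real.log (cnt x n a) - (n:ℝ) * Real.log n
      + ((Fintype.card A : ℝ) + (Fintype.card A) * Real.log ((n:ℝ)+1) + Real.log (2*(n:ℝ)+1)) := by
  set k := Fintype.card A with hkdef
  have hk : 1 ≤ k := Fintype.card_pos
  have hnr : (0:ℝ) < n := by exact_mod_cast hn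
  set v := cnt x n with hvdef
  have hvsum : ∑ a, v a = n := sum_cnt x n
  have hsumv : ∑ a, (v a : ℝ) = (n:ℝ) := by exact_mod_cast congrArg (Nat.cast : ℕ → ℝ) hvsum
  rw [log_kt_eq x n]
  have hup : ∀ a, Real.log (aKT (v a)) ≤ (v a:ℝ) * Real.log (v a) - v a + 1 + Real.log ((n:ℝ)+1) := by
    intro a
    have h1 := log_aKT_le (v a)
    have h2 : Real.log ((v a : ℝ)+1) ≤ Real.log ((n:ℝ)+1) := by
      apply Real.log_le_log (by positivity)
      have : (v a : ℝ) ≤ n := by exact_mod_cast cnt_le x n a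
      linarith
    linarith
  have hsum : ∑ a, Real.log (aKT (v a))
      ≤ ∑ a, (v a:ℝ) * Real.log (v a) - n + k + k * Real.log ((n:ℝ)+1) := by
    have := Finset.sum_le_sum (fun a (_ : a ∈ Finset.univ) => hup a)
    rw [show ∑ a, ((v a:ℝ) * Real.log (v a) - v a + 1 + Real.log ((n:ℝ)+1))
        = ∑ a, (v a:ℝ) * Real.log (v a) - n + k + k * Real.log ((n:ℝ)+1) by
      rw [Finset.sum_add_distrib, Finset.sum_add_distrib, Finset.sum_sub_distrib, hsumv,
        Finset.sum_const, Finset.sum_const]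
      simp [hkdef]] at this
    exact this
  have hD := log_DKT_ge k n hk
  linarith

end main_bounds

end KTaux

section KTlim
open Finset

-- log n / n → 0 and friends
lemma tendsto_log_nat_div : Tendsto (fun n : ℕ => Real.log n / n) atTop (nhds 0) := by
  have h := Real.isLittleO_log_id_atTop.tendsto_div_nhds_zero
  exact h.comp tendsto_natCast_atTop_atTop

lemma tendsto_log_shift_div (c d : ℝ) (hc : 0 < c) (hd : 0 ≤ d) (hcd : 1 ≤ c + d) :
    Tendsto (fun n : ℕ => Real.log (c*(n:ℝ)+d) / n) atTop (nhds 0) := by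
  have hupper : Tendsto (fun n : ℕ => (Real.log (c+d) + Real.log n) / n) atTop (nhds 0) := by
    have h1 : Tendsto (fun n : ℕ => Real.log (c+d) / n) atTop (nhds 0) :=
      tendsto_const_div_atTop_nhds_zero_nat _
    have h2 := tendsto_log_nat_div
    have := h1.add h2
    simpa [add_div] using this
  apply tendsto_of_tendsto_of_tendsto_of_le_of_le' tendsto_const_nhds hupper
  · filter_upwards [eventually_ge_atTop 1] with n hn
    have hnr : (1:ℝ) ≤ n := by exact_mod_cast hn
    apply div_nonneg _ (by linarith)
    apply Real.log_nonneg
    nlinarith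
  · filter_upwards [eventually_ge_atTop 1] with n hn
    have hnr : (1:ℝ) ≤ n := by exact_mod_cast hn
    apply div_le_div_of_nonneg_right _ (by linarith)
    rw [← Real.log_mul (by positivity) (by linarith)]
    apply Real.log_le_log (by nlinarith)
    nlinarith

lemma kt_tendsto {A : Type*} [Fintype A] [Nonempty A] [DecidableEq A]
    (p : A → ℝ) (hp : ∀ a, 0 < p a) (hs : ∑ a, p a = 1) (x : ℕ → A)
    (hc : ∀ a, Tendsto (fun n : ℕ => (cnt x n a : ℝ)/n) atTop (nhds (p a))) :
    Tendsto (fun n : ℕ => -(Real.log ((∏ a, aKT (cnt x n a)) / DKT (Fintype.card A) n))/n)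
      atTop (nhds (-∑ a, p a * Real.log (p a))) := by
  set K : ℝ := (Fintype.card A : ℝ) with hK
  set B0 : ℝ := K + 1 + K * Real.log (K+1) + K * Real.log 3 + Real.log (K+2) with hB0
  set B1 : ℝ := 2*K + 1 with hB1
  set H : ℝ := -∑ a, p a * Real.log (p a) with hH
  set u : ℕ → ℝ := fun n => (∑ a, ((cnt x n a:ℝ)/n) * (-(Real.log (p a)))) + (B0 + B1 * Real.log n)/n with hu
  set l : ℕ → ℝ := fun n => (∑ a, -(((cnt x n a:ℝ)/n) * Real.log ((cnt x n a:ℝ)/n)))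
      - (K + K * Real.log ((n:ℝ)+1) + Real.log (2*(n:ℝ)+1))/n with hl
  have hulim : Tendsto u atTop (nhds H) := by
    have h1 : Tendsto (fun n : ℕ => ∑ a, ((cnt x n a:ℝ)/n) * (-(Real.log (p a)))) atTop
        (nhds (∑ a, p a * (-(Real.log (p a))))) := by
      apply tendsto_finset_sum
      intro a _
      exact (hc a).mul tendsto_const_nhds
    have h2 : Tendsto (fun n : ℕ => (B0 + B1 * Real.log n)/n) atTop (nhds 0) := by
      have h3 : Tendsto (fun n : ℕ => B0/n) atTop (nhds 0) := tendsto_const_div_atTop_nhds_zero_nat _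
      have h4 : Tendsto (fun n : ℕ => B1 * (Real.log n / n)) atTop (nhds (B1 * 0)) :=
        tendsto_log_nat_div.const_mul B1
      have := h3.add h4
      simp only [mul_zero, add_zero] at this
      convert this using 2 with n
      field_simp
    have := h1.add h2
    rw [add_zero] at this
    have hHe : H = ∑ a, p a * (-(Real.log (p a))) := by simp [hH, mul_neg]
    exact hHe ▸ this
  have hllim : Tendsto l atTop (nhds H) := by
    have h1 : Tendsto (fun n : ℕ => ∑ a, -(((cnt x n a:ℝ)/n) * Real.log ((cnt x n a:ℝ)/n)))
        atTop (nhds (∑ a, -(p a * Real.log (p a)))) := by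
      apply tendsto_finset_sum
      intro a _
      have hcont : ContinuousAt (fun t : ℝ => -(t * Real.log t)) (p a) := by
        apply ContinuousAt.neg
        exact continuousAt_id.mul (Real.continuousAt_log (hp a).ne')
      exact hcont.tendsto.comp (hc a)
    have h2 : Tendsto (fun n : ℕ => (K + K * Real.log ((n:ℝ)+1) + Real.log (2*(n:ℝ)+1))/n)
        atTop (nhds 0) := by
      have h3 : Tendsto (fun n : ℕ => K/n) atTop (nhds 0) := tendsto_const_div_atTop_nhds_zero_nat _
      have h4' := (tendsto_log_shift_div 1 1 one_pos zero_le_one (by norm_num)).const_mul K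
      simp only [one_mul] at h4'
      have h4 : Tendsto (fun n : ℕ => K * (Real.log ((n:ℝ)+1) / n)) atTop (nhds (K * 0)) := h4'
      have h5 : Tendsto (fun n : ℕ => Real.log (2*(n:ℝ)+1) / n) atTop (nhds 0) :=
        tendsto_log_shift_div 2 1 two_pos zero_le_one (by norm_num)
      have := (h3.add h4).add h5
      simp only [mul_zero, add_zero] at this
      convert this using 2 with n
      field_simp
    have := h1.sub h2
    rw [sub_zero] at this
    have hHe : H = ∑ a, -(p a * Real.log (p a)) := by simp [hH]
    exact hHe ▸ this
  apply tendsto_of_tendsto_of_tendsto_of_le_of_le' hllim hulim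
  · -- l ≤ g
    filter_upwards [eventually_ge_atTop 1] with n hn
    have hnr : (0:ℝ) < n := by exact_mod_cast hn
    have hlow := kt_lower x n hn
    have hsumc : ∑ a, ((cnt x n a : ℝ)) = (n:ℝ) := by exact_mod_cast congrArg (Nat.cast : ℕ → ℝ) (sum_cnt x n)
    -- identity: ∑ -( (c/n) log(c/n) ) = (n log n - ∑ c log c)/n
    have hid : ∑ a, -(((cnt x n a:ℝ)/n) * Real.log ((cnt x n a:ℝ)/n))
        = ((n:ℝ) * Real.log n - ∑ a, (cnt x n a : ℝ) * Real.log (cnt x n a))/n := by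
      have hterm : ∀ a, ((cnt x n a:ℝ)/n) * Real.log ((cnt x n a:ℝ)/n)
          = ((cnt x n a:ℝ) * Real.log (cnt x n a))/n - ((cnt x n a:ℝ)/n) * Real.log n := by
        intro a
        rcases Nat.eq_zero_or_pos (cnt x n a) with h | h
        · simp [h]
        · have hcr : (0:ℝ) < (cnt x n a : ℝ) := by exact_mod_cast h
          rw [Real.log_div hcr.ne' hnr.ne']
          field_simp
      have hlogsum : ∑ a, ((cnt x n a:ℝ)/n) * Real.log n = Real.log n := by
        rw [← Finset.sum_mul, ← Finset.sum_div, hsumc, div_self hnr.ne', one_mul]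
      rw [Finset.sum_congr rfl (fun a _ => congrArg Neg.neg (hterm a)), Finset.sum_neg_distrib,
        Finset.sum_sub_distrib, ← Finset.sum_div, hlogsum]
      field_simp
      ring
    rw [hl]
    simp only
    rw [hid, ← hK] at *
    rw [div_sub_div_same]
    rw [div_le_div_iff_of_pos_right hnr]
    have hlow' := hlow
    rw [← hK] at hlow'
    linarith
  · -- g ≤ u
    filter_upwards [eventually_ge_atTop 1] with n hn
    have hnr : (0:ℝ) < n := by exact_mod_cast hn
    have hupb := kt_upper p hp hs x n hn
    rw [log_prod_p p hp x n, ← hK] at hupb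
    have hterm2 : ∀ a : A, ((cnt x n a:ℝ)/n) * (-(Real.log (p a)))
        = (-((cnt x n a:ℝ) * Real.log (p a)))/n := fun a => by ring
    have hrwu : ∑ a, ((cnt x n a:ℝ)/n) * (-(Real.log (p a)))
        = (-(∑ a, (cnt x n a:ℝ) * Real.log (p a)))/n := by
      rw [Finset.sum_congr rfl (fun a _ => hterm2 a), ← Finset.sum_div, ← Finset.sum_neg_distrib]
    rw [hu]
    simp only
    rw [hrwu, ← add_div, div_le_div_iff_of_pos_right hnr]
    linarith

end KTlim

section KTprob
variable {A : Type*} [Fintype A] [Nonempty A] [DecidableEq A]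
  [MeasurableSpace A] [MeasurableSingletonClass A]
  {Ω : Type*} [MeasurableSpace Ω] (P : Measure Ω) [IsProbabilityMeasure P]
  (X : ℕ → Ω → A) (hXmeas : ∀ i, Measurable (X i))
  (p : A → ℝ) (hppos : ∀ a, 0 < p a) (hpsum : ∑ a, p a = 1)
  (hiid : ∀ (n : ℕ) (x : Fin n → A),
      P {ω | ∀ i : Fin n, X i ω = x i} = ENNReal.ofReal (∏ i : Fin n, p (x i)))

open Finset

include hXmeas hppos hpsum hiid in
lemma cyl_union (n : ℕ) (T : Finset (Fin n → A)) :
    P {ω | (fun i : Fin n => X i ω) ∈ (T : Set (Fin n → A))}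
      = ENNReal.ofReal (∑ x ∈ T, ∏ i, p (x i)) := by
  have hset : {ω | (fun i : Fin n => X i ω) ∈ (T : Set (Fin n → A))}
      = ⋃ x ∈ T, {ω | ∀ i : Fin n, X i ω = x i} := by
    ext ω
    simp only [Set.mem_setOf_eq, Set.mem_iUnion, Finset.mem_coe]
    constructor
    · intro h; exact ⟨_, h, fun i => rfl⟩
    · rintro ⟨x, hx, h⟩
      have : (fun i : Fin n => X i ω) = x := funext h
      rwa [this]
  rw [hset, measure_biUnion_finset]
  · rw [Finset.sum_congr rfl (fun x _ => hiid n x)]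
    rw [← ENNReal.ofReal_sum_of_nonneg]
    intro x _
    exact Finset.prod_nonneg (fun i _ => (hppos (x i)).le)
  · intro x hx y hy hxy
    simp only [Function.onFun]
    apply Set.disjoint_left.mpr
    intro ω h1 h2
    exact hxy (funext (fun i => (h1 i).symm.trans (h2 i)))
  · intro x _
    have : {ω | ∀ i : Fin n, X i ω = x i} = ⋂ i : Fin n, (X i) ⁻¹' {x i} := by
      ext ω; simp [Set.mem_iInter]
    rw [this]
    exact MeasurableSet.iInter (fun i => (hXmeas i) (measurableSet_singleton _))

include hXmeas hppos hpsum hiid in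
lemma cyl_constraint (n : ℕ) (s : Finset (Fin n)) (y : Fin n → A) :
    P {ω | ∀ j ∈ s, X j ω = y j} = ENNReal.ofReal (∏ j ∈ s, p (y j)) := by
  classical
  set T : Finset (Fin n → A) := Finset.univ.filter (fun x => ∀ j ∈ s, x j = y j) with hT
  have hset : {ω | ∀ j ∈ s, X j ω = y j}
      = {ω | (fun i : Fin n => X i ω) ∈ (T : Set (Fin n → A))} := by
    ext ω
    simp [hT]
  rw [hset, cyl_union P X hXmeas p hppos hpsum hiid n T]
  congr 1
  -- sum computation
  set f : Fin n → A → ℝ := fun j b => p b * (if j ∈ s then (if b = y j then 1 else 0) else 1) with hf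
  have hterm : ∀ x : Fin n → A,
      (if (∀ j ∈ s, x j = y j) then (∏ i, p (x i)) else 0) = ∏ j, f j (x j) := by
    intro x
    rw [hf]
    simp only
    rw [Finset.prod_mul_distrib]
    have : (∏ j : Fin n, (if j ∈ s then (if x j = y j then (1:ℝ) else 0) else 1))
        = ∏ j ∈ s, (if x j = y j then (1:ℝ) else 0) := by
      rw [Finset.prod_ite_mem, Finset.univ_inter]
    rw [this, Finset.prod_boole]
    by_cases h : ∀ j ∈ s, x j = y j
    · simp [h]
    · simp [h]
  have hsum : ∑ x ∈ T, ∏ i, p (x i) = ∑ x : Fin n → A, ∏ j, f j (x j) := by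
    rw [Finset.sum_filter]
    exact Finset.sum_congr rfl (fun x _ => hterm x)
  rw [hsum, ← Fintype.prod_sum (f := f)]
  have hcol : ∀ j : Fin n, (∑ b, f j b) = if j ∈ s then p (y j) else 1 := by
    intro j
    rw [hf]
    by_cases h : j ∈ s
    · simp only [h, if_true]
      rw [Finset.sum_congr rfl (fun b _ => by rw [mul_ite, mul_one, mul_zero])]
      simp
    · simp [h, hpsum]
  rw [Finset.prod_congr rfl (fun j _ => hcol j)]
  rw [Finset.prod_ite_mem, Finset.univ_inter]


include hXmeas hppos hpsum hiid in
lemma marg (i : ℕ) (a : A) : P ((X i)⁻¹' {a}) = ENNReal.ofReal (p a) := by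
  have h := cyl_constraint P X hXmeas p hppos hpsum hiid (i+1) {Fin.last i} (fun _ => a)
  have hset : {ω | ∀ j ∈ ({Fin.last i} : Finset (Fin (i+1))), X j ω = a} = (X i)⁻¹' {a} := by
    ext ω
    simp [Fin.val_last]
  rw [hset] at h
  simpa using h

include hXmeas hppos hpsum hiid in
lemma pairm (i j : ℕ) (hij : i ≠ j) (a b : A) :
    P ((X i)⁻¹' {a} ∩ (X j)⁻¹' {b}) = ENNReal.ofReal (p a * p b) := by
  set n := max i j + 1 with hn
  have hi : i < n := by omega
  have hj : j < n := by omega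
  set i' : Fin n := ⟨i, hi⟩
  set j' : Fin n := ⟨j, hj⟩
  have hij' : i' ≠ j' := by
    intro h
    exact hij (congrArg Fin.val h)
  set y : Fin n → A := fun t => if t = i' then a else b with hy
  have h := cyl_constraint P X hXmeas p hppos hpsum hiid n {i', j'} y
  have hset : {ω | ∀ t ∈ ({i', j'} : Finset (Fin n)), X t ω = y t}
      = (X i)⁻¹' {a} ∩ (X j)⁻¹' {b} := by
    ext ω
    simp only [Finset.mem_insert, Finset.mem_singleton, Set.mem_setOf_eq, Set.mem_inter_iff,
      Set.mem_preimage, Set.mem_singleton_iff]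
    constructor
    · intro h
      refine ⟨?_, ?_⟩
      · have := h i' (Or.inl rfl)
        simpa [hy] using this
      · have := h j' (Or.inr rfl)
        simpa [hy, hij'.symm] using this
    · rintro ⟨h1, h2⟩ t ht
      rcases ht with rfl | rfl
      · simpa [hy] using h1
      · simpa [hy, hij'.symm] using h2
  rw [hset] at h
  rw [h, Finset.prod_insert (by simpa using hij')]
  simp [hy, hij'.symm]

include hXmeas hppos hpsum hiid in
lemma identX (i : ℕ) : IdentDistrib (X i) (X 0) P P := by
  refine ⟨(hXmeas i).aemeasurable, (hXmeas 0).aemeasurable, ?_⟩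
  apply MeasureTheory.Measure.ext_iff_singleton.mpr
  intro a
  rw [Measure.map_apply (hXmeas i) (measurableSet_singleton a),
    Measure.map_apply (hXmeas 0) (measurableSet_singleton a),
    marg P X hXmeas p hppos hpsum hiid i a, marg P X hXmeas p hppos hpsum hiid 0 a]

include hXmeas hppos hpsum hiid in
lemma indepX (i j : ℕ) (hij : i ≠ j) : IndepFun (X i) (X j) P := by
  rw [indepFun_iff_map_prod_eq_prod_map_map (hXmeas i).aemeasurable (hXmeas j).aemeasurable]
  apply MeasureTheory.Measure.ext_iff_singleton.mpr
  rintro ⟨a, b⟩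
  have h1 : ({(a, b)} : Set (A × A)) = {a} ×ˢ {b} := (Set.singleton_prod_singleton).symm
  rw [h1, Measure.prod_prod,
    Measure.map_apply (hXmeas i) (measurableSet_singleton a),
    Measure.map_apply (hXmeas j) (measurableSet_singleton b),
    Measure.map_apply ((hXmeas i).prodMk (hXmeas j)) ((measurableSet_singleton a).prod (measurableSet_singleton b))]
  have h2 : (fun ω => (X i ω, X j ω)) ⁻¹' ({a} ×ˢ {b}) = (X i)⁻¹' {a} ∩ (X j)⁻¹' {b} := by
    ext ω; simp
  rw [h2, pairm P X hXmeas p hppos hpsum hiid i j hij a b,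
    marg P X hXmeas p hppos hpsum hiid i a, marg P X hXmeas p hppos hpsum hiid j b,
    ENNReal.ofReal_mul (hppos a).le]


include hXmeas hppos hpsum hiid in
lemma lln (a : A) : ∀ᵐ ω ∂P,
    Tendsto (fun n : ℕ => (cnt (fun i => X i ω) n a : ℝ)/n) atTop (nhds (p a)) := by
  classical
  set f : A → ℝ := fun b => if b = a then 1 else 0 with hf
  have hfmeas : Measurable f := by
    have : f = Set.indicator {a} (fun _ => (1:ℝ)) := by
      funext b
      simp [hf, Set.indicator_apply]
    rw [this]
    exact (measurable_const).indicator (measurableSet_singleton a)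
  set Y : ℕ → Ω → ℝ := fun i ω => f (X i ω) with hY
  have hint : Integrable (Y 0) P := by
    have hYi : Y 0 = ((X 0)⁻¹' {a}).indicator (fun _ => (1:ℝ)) := by
      funext ω
      simp [hY, hf, Set.indicator_apply]
    rw [hYi]
    exact (integrable_const 1).indicator ((hXmeas 0) (measurableSet_singleton a))
  have hindep : Pairwise (Function.onFun (IndepFun · · P) Y) := by
    intro i j hij
    exact (indepX P X hXmeas p hppos hpsum hiid i j hij).comp hfmeas hfmeas
  have hident : ∀ i, IdentDistrib (Y i) (Y 0) P P := fun i => (identX P X hXmeas p hppos hpsum hiid i).comp hfmeas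
  have hslln := strong_law_ae_real Y hint hindep hident
  have hmean : P[Y 0] = p a := by
    have hYi : Y 0 = ((X 0)⁻¹' {a}).indicator (fun _ => (1:ℝ)) := by
      funext ω
      simp [hY, hf, Set.indicator_apply]
    rw [hYi, integral_indicator_const (1:ℝ) ((hXmeas 0) (measurableSet_singleton a)),
      measureReal_def, marg P X hXmeas p hppos hpsum hiid 0 a]
    simp [ENNReal.toReal_ofReal (hppos a).le]
  rw [hmean] at hslln
  filter_upwards [hslln] with ω hω
  have hsum : ∀ n, (∑ i ∈ Finset.range n, Y i ω) = (cnt (fun i => X i ω) n a : ℝ) := by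
    intro n
    rw [hY]
    simp only [hf]
    rw [Finset.sum_boole]
    rfl
  have : (fun n : ℕ => (∑ i ∈ Finset.range n, Y i ω)/n)
      = (fun n : ℕ => (cnt (fun i => X i ω) n a : ℝ)/n) := by
    funext n
    rw [hsum n]
  rwa [this] at hω


end KTprob

/-- The Krichevsky–Trofimov estimator
`P_c(x₁ⁿ) = ∏_{t=1}^n (v(x_t|x₁^{t-1}) + 1/2)/(t - 1 + |A|/2)` has pointwise redundancy
`O(log n)` uniformly over sequences, i.e. `log P(x₁ⁿ) - log P_c(x₁ⁿ) ≤ C log n` for all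
`n ≥ 2` and all strings; in particular for i.i.d. `X₁, X₂, …` with distribution `p`,
`-(1/n) log P_c(X₁ⁿ) → H(p)` almost surely. -/
theorem stmt19_kt_estimator_universal
    {A : Type*} [Fintype A] [Nonempty A] [DecidableEq A]
    [MeasurableSpace A] [MeasurableSingletonClass A]
    {Ω : Type*} [MeasurableSpace Ω] (P : Measure Ω) [IsProbabilityMeasure P]
    (X : ℕ → Ω → A) (hXmeas : ∀ i, Measurable (X i))
    (p : A → ℝ) (hppos : ∀ a, 0 < p a) (hpsum : ∑ a, p a = 1)
    -- i.i.d. with marginal `p`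
    (hiid : ∀ (n : ℕ) (x : Fin n → A),
      P {ω | ∀ i : Fin n, X i ω = x i} = ENNReal.ofReal (∏ i : Fin n, p (x i)))
    -- the KT coding distribution (index `t` runs from `0`, i.e. `t-1+|A|/2 ↦ t+|A|/2`)
    (Pc : (n : ℕ) → (ℕ → A) → ℝ)
    (hPc : ∀ n x, Pc n x = ∏ t ∈ Finset.range n,
      ((((Finset.range t).filter fun i => x i = x t).card : ℝ) + 1 / 2)
        / ((t : ℝ) + (Fintype.card A : ℝ) / 2)) :
    (∃ C : ℝ, 0 < C ∧ ∀ n : ℕ, 2 ≤ n → ∀ x : ℕ → A,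
      Real.log (∏ i ∈ Finset.range n, p (x i)) - Real.log (Pc n x)
        ≤ C * Real.log n) ∧
    (∀ᵐ ω ∂P, Tendsto (fun n : ℕ => -(Real.log (Pc n (fun i => X i ω))) / n)
      atTop (nhds (-∑ a, p a * Real.log (p a)))) := by
  classical
  constructor
  · -- Part 1: uniform redundancy bound
    set K : ℝ := (Fintype.card A : ℝ) with hK
    have hK1 : (1:ℝ) ≤ K := by
      rw [hK]
      exact_mod_cast Fintype.card_pos (α := A)
    set B0 : ℝ := K + 1 + K * Real.log (K+1) + K * Real.log 3 + Real.log (K+2) with hB0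
    set B1 : ℝ := 2*K + 1 with hB1
    have hlog2 : 0 < Real.log 2 := Real.log_pos (by norm_num)
    have hB0nn : 0 ≤ B0 := by
      have h1 : 0 ≤ Real.log (K+1) := Real.log_nonneg (by linarith)
      have h2 : 0 ≤ Real.log 3 := Real.log_nonneg (by norm_num)
      have h3 : 0 ≤ Real.log (K+2) := Real.log_nonneg (by linarith)
      rw [hB0]
      nlinarith
    refine ⟨B1 + B0 / Real.log 2, ?_, ?_⟩
    · have : 0 ≤ B0 / Real.log 2 := div_nonneg hB0nn hlog2.le
      rw [hB1]
      linarith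
    intro n hn x
    have hn1 : 1 ≤ n := by omega
    rw [hPc n x, kt_identity x n]
    have h := kt_upper p hppos hpsum x n hn1
    rw [← hK, ← hB0, ← hB1] at h
    have hlogn : Real.log 2 ≤ Real.log n := by
      apply Real.log_le_log (by norm_num)
      exact_mod_cast hn
    have hB0le : B0 ≤ (B0 / Real.log 2) * Real.log n := by
      rw [div_mul_eq_mul_div, le_div_iff₀ hlog2]
      exact mul_le_mul_of_nonneg_left hlogn hB0nn
    calc Real.log (∏ i ∈ Finset.range n, p (x i))
        - Real.log ((∏ a, aKT (cnt x n a)) / DKT (Fintype.card A) n)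
        ≤ B0 + B1 * Real.log n := h
      _ ≤ (B0 / Real.log 2) * Real.log n + B1 * Real.log n := by linarith
      _ = (B1 + B0 / Real.log 2) * Real.log n := by ring
  · -- Part 2: almost sure convergence
    have hae := MeasureTheory.ae_all_iff.mpr
      (fun a : A => lln P X hXmeas p hppos hpsum hiid a)
    filter_upwards [hae] with ω hω
    have hrw : (fun n : ℕ => -(Real.log (Pc n (fun i => X i ω)))/n)
        = (fun n : ℕ => -(Real.log ((∏ a, aKT (cnt (fun i => X i ω) n a))
            / DKT (Fintype.card A) n))/n) := by
      funext n
      rw [hPc n _, kt_identity]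
    rw [hrw]
    exact kt_tendsto p hppos hpsum _ hω
end
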